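/- arXiv:1102.0224 — 4 statements merged into one kernel-verified Lean document; each statement's English description precedes it below -/
import Mathlib

section
/- Let Ω be the open rectangle of digital price vectors D = (D_1, ..., D_n) satisfying the no-arbitrage bounds given by left and right call spreads of fixed call prices C_0 > C_1 > ... > C_n > C_{n+1} = 0 at strikes 0 = K_0 < K_1 < ... < K_n. Define the entropy function H(D) = −Σ_{i=0}^n p_i ln p_i − Σ_{i=0}^n p_i c_i*(K̄_i), where p_i = D_i − D_{i+1} (with D_0 = 1, D_{n+1} = 0) and K̄_i = ((C_i + K_i D_i) − (C_{i+1} + K_{i+1} D_{i+1}))/p_i (with K_{n+1} D_{n+1} = 0). Then H is differentiable on Ω and ∂H/∂D_i = [ln p_{i−1} − c_{i−1}(β_{i−1}) + β_{i−1} K_i] − [ln p_i − c_i(β_i) + β_i K_i], where β_i is the unique solution of c_i'(β_i) = K̄_i. -/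
open Real MeasureTheory Filter Set Metric intervalIntegral

namespace Stmt10Aux

lemma param_deriv (a d b₀ : ℝ) (g : ℝ → ℝ) (hg : Continuous g) :
    HasDerivAt (fun b => ∫ x in a..d, g x * Real.exp (b * x))
      (∫ x in a..d, (x * g x) * Real.exp (b₀ * x)) b₀ := by
  have h := intervalIntegral.hasDerivAt_integral_of_dominated_loc_of_deriv_le
    (F := fun b x => g x * Real.exp (b * x))
    (F' := fun b x => (x * g x) * Real.exp (b * x))
    (x₀ := b₀) (bound := fun x => (|x| * |g x|) * Real.exp ((|b₀| + 1) * |x|))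
    (a := a) (b := d) (μ := volume) (s := Metric.ball b₀ 1) (Metric.ball_mem_nhds b₀ one_pos) ?_ ?_ ?_ ?_ ?_ ?_
  · exact h.2
  · filter_upwards with b
    exact (hg.mul (by continuity)).aestronglyMeasurable
  · exact (hg.mul (by continuity)).intervalIntegrable a d
  · exact ((continuous_id.mul hg).mul (by continuity)).aestronglyMeasurable
  · refine ae_of_all _ fun x _ b hb => ?_
    have hb' : |b| ≤ |b₀| + 1 := by
      have h1 : |b - b₀| < 1 := by simpa [Real.dist_eq] using hb
      linarith [abs_sub_abs_le_abs_sub b b₀]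
    have hexp : Real.exp (b * x) ≤ Real.exp ((|b₀| + 1) * |x|) := by
      apply Real.exp_le_exp.2
      calc b * x ≤ |b * x| := le_abs_self _
        _ = |b| * |x| := abs_mul b x
        _ ≤ (|b₀| + 1) * |x| := mul_le_mul_of_nonneg_right hb' (abs_nonneg x)
    have : ‖(x * g x) * Real.exp (b * x)‖ = |x| * |g x| * Real.exp (b * x) := by
      rw [norm_mul, norm_mul]
      simp [Real.norm_eq_abs, abs_of_pos (Real.exp_pos _)]
    rw [this]
    exact mul_le_mul_of_nonneg_left hexp (by positivity)
  · exact (((continuous_abs.mul (hg.abs)).mul (by continuity))).intervalIntegrable a d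
  · refine ae_of_all _ fun x _ b _ => ?_
    have h1 : HasDerivAt (fun b : ℝ => b * x) x b := by
      simpa using (hasDerivAt_id b).mul_const x
    have h2 := (h1.exp).const_mul (g x)
    refine h2.congr_deriv ?_
    ring

variable {a d : ℝ}

noncomputable def F0 (a d b : ℝ) : ℝ := ∫ x in a..d, Real.exp (b * x)
noncomputable def F1 (a d b : ℝ) : ℝ := ∫ x in a..d, x * Real.exp (b * x)
noncomputable def F2 (a d b : ℝ) : ℝ := ∫ x in a..d, (x * x) * Real.exp (b * x)

lemma F0_pos (had : a < d) (b : ℝ) : 0 < F0 a d b :=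
  intervalIntegral_pos_of_pos
    ((by continuity : Continuous fun x => Real.exp (b * x)).intervalIntegrable a d)
    (fun x => Real.exp_pos _) had

lemma hasDerivAt_F0 (b : ℝ) : HasDerivAt (F0 a d) (F1 a d b) b := by
  have := param_deriv a d b (fun _ => 1) continuous_const
  unfold F0 F1; simpa using this

lemma hasDerivAt_F1 (b : ℝ) : HasDerivAt (F1 a d) (F2 a d b) b := by
  have := param_deriv a d b (fun x => x) continuous_id
  unfold F1 F2; simpa using this

lemma F1_bounds (had : a < d) (b : ℝ) :
    a * F0 a d b < F1 a d b ∧ F1 a d b < d * F0 a d b := by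
  have hi1 : IntervalIntegrable (fun x : ℝ => x * Real.exp (b * x)) volume a d :=
    (by continuity : Continuous fun x : ℝ => x * Real.exp (b * x)).intervalIntegrable a d
  have hi0 : IntervalIntegrable (fun x : ℝ => a * Real.exp (b * x)) volume a d :=
    (by continuity : Continuous fun x : ℝ => a * Real.exp (b * x)).intervalIntegrable a d
  have hi0' : IntervalIntegrable (fun x : ℝ => d * Real.exp (b * x)) volume a d :=
    (by continuity : Continuous fun x : ℝ => d * Real.exp (b * x)).intervalIntegrable a d
  constructor
  · have h : 0 < ∫ x in a..d, (x - a) * Real.exp (b * x) := by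
      apply intervalIntegral_pos_of_pos_on
      · exact (by continuity : Continuous fun x : ℝ => (x - a) * Real.exp (b * x)).intervalIntegrable a d
      · intro x hx
        exact mul_pos (by linarith [hx.1]) (Real.exp_pos _)
      · exact had
    have he : (∫ x in a..d, (x - a) * Real.exp (b * x))
        = F1 a d b - a * F0 a d b := by
      have h2 : (fun x => (x - a) * Real.exp (b * x))
          = fun x => x * Real.exp (b * x) - a * Real.exp (b * x) := by funext x; ring
      rw [h2, intervalIntegral.integral_sub hi1 hi0, intervalIntegral.integral_const_mul]
      rfl
    linarith [he ▸ h]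
  · have h : 0 < ∫ x in a..d, (d - x) * Real.exp (b * x) := by
      apply intervalIntegral_pos_of_pos_on
      · exact (by continuity : Continuous fun x : ℝ => (d - x) * Real.exp (b * x)).intervalIntegrable a d
      · intro x hx
        exact mul_pos (by linarith [hx.2]) (Real.exp_pos _)
      · exact had
    have he : (∫ x in a..d, (d - x) * Real.exp (b * x))
        = d * F0 a d b - F1 a d b := by
      have h2 : (fun x => (d - x) * Real.exp (b * x))
          = fun x => d * Real.exp (b * x) - x * Real.exp (b * x) := by funext x; ring
      rw [h2, intervalIntegral.integral_sub hi0' hi1, intervalIntegral.integral_const_mul]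
      rfl
    linarith [he ▸ h]

lemma F_var_pos (had : a < d) (b : ℝ) :
    0 < F0 a d b * F2 a d b - (F1 a d b) ^ 2 := by
  set m : ℝ := F1 a d b / F0 a d b with hm
  have hF0 := F0_pos had b
  have hVexp : (∫ x in a..d, (x - m) ^ 2 * Real.exp (b * x))
      = F2 a d b - (2 * m) * F1 a d b + m ^ 2 * F0 a d b := by
    have h1 : (fun x => (x - m) ^ 2 * Real.exp (b * x))
        = fun x => ((x * x) * Real.exp (b * x) - (2 * m) * (x * Real.exp (b * x)))
            + m ^ 2 * Real.exp (b * x) := by funext x; ring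
    rw [h1, intervalIntegral.integral_add, intervalIntegral.integral_sub,
      intervalIntegral.integral_const_mul, intervalIntegral.integral_const_mul]
    · rfl
    · exact (by continuity : Continuous fun x : ℝ => (x * x) * Real.exp (b * x)).intervalIntegrable a d
    · exact (by continuity : Continuous fun x : ℝ => (2 * m) * (x * Real.exp (b * x))).intervalIntegrable a d
    · exact (by continuity : Continuous fun x : ℝ => (x * x) * Real.exp (b * x) - (2 * m) * (x * Real.exp (b * x))).intervalIntegrable a d
    · exact (by continuity : Continuous fun x : ℝ => m ^ 2 * Real.exp (b * x)).intervalIntegrable a d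
  have hVpos : 0 < ∫ x in a..d, (x - m) ^ 2 * Real.exp (b * x) := by
    set mid := (a + d) / 2 with hmid
    have hcont : Continuous fun x => (x - m) ^ 2 * Real.exp (b * x) := by continuity
    have hsplit : (∫ x in a..mid, (x - m) ^ 2 * Real.exp (b * x))
        + (∫ x in mid..d, (x - m) ^ 2 * Real.exp (b * x))
        = ∫ x in a..d, (x - m) ^ 2 * Real.exp (b * x) :=
      intervalIntegral.integral_add_adjacent_intervals (hcont.intervalIntegrable a mid)
        (hcont.intervalIntegrable mid d)
    rcases le_or_gt m mid with hc | hc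
    · have hpos : 0 < ∫ x in mid..d, (x - m) ^ 2 * Real.exp (b * x) := by
        apply intervalIntegral_pos_of_pos_on (hcont.intervalIntegrable mid d)
        · intro x hx
          have hne : x - m ≠ 0 := by cases hx; intro h; nlinarith
          exact mul_pos (pow_two_pos_of_ne_zero hne) (Real.exp_pos _)
        · simp only [hmid]; linarith
      have hnn : 0 ≤ ∫ x in a..mid, (x - m) ^ 2 * Real.exp (b * x) :=
        intervalIntegral.integral_nonneg (by simp only [hmid]; linarith)
          (fun x _ => by positivity)
      linarith
    · have hpos : 0 < ∫ x in a..mid, (x - m) ^ 2 * Real.exp (b * x) := by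
        apply intervalIntegral_pos_of_pos_on (hcont.intervalIntegrable a mid)
        · intro x hx
          have hne : x - m ≠ 0 := by cases hx; intro h; nlinarith
          exact mul_pos (pow_two_pos_of_ne_zero hne) (Real.exp_pos _)
        · simp only [hmid]; linarith
      have hnn : 0 ≤ ∫ x in mid..d, (x - m) ^ 2 * Real.exp (b * x) :=
        intervalIntegral.integral_nonneg (by simp only [hmid]; linarith)
          (fun x _ => by positivity)
      linarith
  have hkey : F0 a d b * F2 a d b - (F1 a d b) ^ 2
      = F0 a d b * (∫ x in a..d, (x - m) ^ 2 * Real.exp (b * x)) := by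
    rw [hVexp, hm]
    field_simp
    ring
  rw [hkey]
  exact mul_pos hF0 hVpos

lemma mul_log_deriv {q : ℝ → ℝ} {σ p₀ t₀ : ℝ} (hq : HasDerivAt q σ t₀) (hqt : q t₀ = p₀)
    (h0 : p₀ ≠ 0) :
    HasDerivAt (fun t => q t * Real.log (q t)) (σ * Real.log p₀ + σ) t₀ := by
  have hlog : HasDerivAt (fun t => Real.log (q t)) (σ / p₀) t₀ := by
    simpa [hqt] using hq.log (by rw [hqt]; exact h0)
  have h := hq.mul hlog
  refine h.congr_deriv ?_
  rw [hqt]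
  field_simp

lemma comp_term {q u gs : ℝ → ℝ} {σ τ m₀ βv t₀ : ℝ}
    (hq : HasDerivAt q σ t₀) (hu : HasDerivAt u τ t₀) (hq0 : q t₀ ≠ 0)
    (hm : u t₀ / q t₀ = m₀) (hgs : HasDerivAt gs βv m₀) :
    HasDerivAt (fun t => q t * gs (u t / q t)) (σ * gs m₀ + βv * (τ - σ * m₀)) t₀ := by
  have hdiv : HasDerivAt (fun t => u t / q t) ((τ * q t₀ - u t₀ * σ) / (q t₀) ^ 2) t₀ :=
    hu.div hq hq0
  rw [← hm] at hgs
  have hcomp := hgs.comp t₀ hdiv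
  have h := hq.mul hcomp
  refine h.congr_deriv ?_
  simp only [Function.comp_apply]
  rw [← hm]
  field_simp

lemma tangent_line {f f' : ℝ → ℝ} (hf : ∀ x, HasDerivAt f (f' x) x) (hmono : StrictMono f')
    (ξ b : ℝ) : f ξ + f' ξ * (b - ξ) ≤ f b := by
  rcases lt_trichotomy b ξ with h | h | h
  · obtain ⟨ζ, hζ, hs⟩ := exists_hasDerivAt_eq_slope f f' h
      (fun x _ => (hf x).continuousAt.continuousWithinAt) (fun x _ => hf x)
    have h1 : f' ξ ≥ f' ζ := (hmono.le_iff_le).2 (le_of_lt hζ.2)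
    have h2 : (f ξ - f b) / (ξ - b) ≤ f' ξ := hs ▸ h1
    rw [div_le_iff₀ (by linarith)] at h2
    linarith
  · simp [h]
  · obtain ⟨ζ, hζ, hs⟩ := exists_hasDerivAt_eq_slope f f' h
      (fun x _ => (hf x).continuousAt.continuousWithinAt) (fun x _ => hf x)
    have h1 : f' ξ ≤ f' ζ := (hmono.le_iff_le).2 (le_of_lt hζ.1)
    have h2 : f' ξ ≤ (f b - f ξ) / (b - ξ) := hs ▸ h1
    rw [le_div_iff₀ (by linarith)] at h2
    linarith

lemma legendre_core {g gs : ℝ → ℝ} {S : Set ℝ} {y₀ βv : ℝ}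
    (hgs : ∀ y, gs y = sSup ((fun b => b * y - g b) '' S))
    (hβS : βv ∈ S)
    (h3 : ∀ b ∈ S, b * y₀ - g b ≤ βv * y₀ - g βv)
    (hsel : ∀ δ > (0:ℝ), ∀ᶠ y in nhds y₀,
      ∃ ξ ∈ S, |ξ - βv| ≤ δ ∧ ∀ b ∈ S, b * y - g b ≤ ξ * y - g ξ) :
    gs y₀ = βv * y₀ - g βv ∧ HasDerivAt gs βv y₀ := by
  have hval : gs y₀ = βv * y₀ - g βv := by
    rw [hgs y₀]
    apply IsGreatest.csSup_eq
    exact ⟨⟨βv, hβS, rfl⟩, by rintro _ ⟨b, hb, rfl⟩; exact h3 b hb⟩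
  refine ⟨hval, ?_⟩
  rw [hasDerivAt_iff_isLittleO, Asymptotics.isLittleO_iff]
  intro ε hε
  filter_upwards [hsel ε hε] with y hy
  obtain ⟨ξ, hξS, hξd, hmax⟩ := hy
  have hvy : gs y = ξ * y - g ξ := by
    rw [hgs y]
    apply IsGreatest.csSup_eq
    exact ⟨⟨ξ, hξS, rfl⟩, by rintro _ ⟨b, hb, rfl⟩; exact hmax b hb⟩
  have hlow : βv * y - g βv ≤ gs y := hvy ▸ hmax βv hβS
  have hup : ξ * y₀ - g ξ ≤ gs y₀ := hval ▸ h3 ξ hξS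
  have habs : |gs y - gs y₀ - (y - y₀) * βv| ≤ ε * |y - y₀| := by
    rw [abs_le]
    constructor
    · have : (0:ℝ) ≤ gs y - gs y₀ - (y - y₀) * βv := by
        rw [hval]; nlinarith [hlow]
      nlinarith [abs_nonneg (y - y₀), mul_nonneg (le_of_lt hε) (abs_nonneg (y - y₀))]
    · have h1 : gs y - gs y₀ ≤ ξ * (y - y₀) := by nlinarith [hvy, hup]
      have h2 : gs y - gs y₀ - (y - y₀) * βv ≤ (ξ - βv) * (y - y₀) := by nlinarith
      calc gs y - gs y₀ - (y - y₀) * βv ≤ (ξ - βv) * (y - y₀) := h2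
        _ ≤ |(ξ - βv) * (y - y₀)| := le_abs_self _
        _ = |ξ - βv| * |y - y₀| := abs_mul _ _
        _ ≤ ε * |y - y₀| := mul_le_mul_of_nonneg_right hξd (abs_nonneg _)
  simpa [Real.norm_eq_abs, smul_eq_mul] using habs


lemma bucket_lt {a d : ℝ} (had : a < d) (g gs : ℝ → ℝ)
    (hg : ∀ b, g b = Real.log (∫ x in a..d, Real.exp (b * x)))
    (hgs : ∀ y, gs y = sSup (Set.range fun b => b * y - g b))
    (βv y₀ : ℝ) (hy₀ : deriv g βv = y₀) :
    gs y₀ = βv * y₀ - g βv ∧ HasDerivAt gs βv y₀ ∧ a < y₀ ∧ y₀ < d := by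
  have hgF : g = fun b => Real.log (F0 a d b) := funext hg
  set G : ℝ → ℝ := fun b => F1 a d b / F0 a d b with hG
  have hdg : ∀ b, HasDerivAt g (G b) b := by
    intro b
    rw [hgF]
    exact (hasDerivAt_F0 b).log (ne_of_gt (F0_pos had b))
  have hdG : ∀ b, HasDerivAt G ((F0 a d b * F2 a d b - (F1 a d b) ^ 2) / (F0 a d b) ^ 2) b := by
    intro b
    have := (hasDerivAt_F1 (a := a) (d := d) b).div (hasDerivAt_F0 b) (ne_of_gt (F0_pos had b))
    refine this.congr_deriv ?_
    ring
  have hGmono : StrictMono G := by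
    apply strictMono_of_deriv_pos
    intro b
    rw [(hdG b).deriv]
    exact div_pos (F_var_pos had b) (pow_pos (F0_pos had b) 2)
  have hyG : G βv = y₀ := by rw [← hy₀, (hdg βv).deriv]
  have htan : ∀ ξ b : ℝ, b * G ξ - g b ≤ ξ * G ξ - g ξ := by
    intro ξ b
    have := tangent_line hdg hGmono ξ b
    nlinarith [this]
  have h3 : ∀ b ∈ (Set.univ : Set ℝ), b * y₀ - g b ≤ βv * y₀ - g βv := by
    intro b _
    rw [← hyG]
    exact htan βv b
  have hsel : ∀ δ > (0:ℝ), ∀ᶠ y in nhds y₀,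
      ∃ ξ ∈ (Set.univ : Set ℝ), |ξ - βv| ≤ δ ∧
        ∀ b ∈ (Set.univ : Set ℝ), b * y - g b ≤ ξ * y - g ξ := by
    intro δ hδ
    have hmem : Set.Ioo (G (βv - δ)) (G (βv + δ)) ∈ nhds y₀ := by
      apply Ioo_mem_nhds
      · rw [← hyG]; exact hGmono (by linarith)
      · rw [← hyG]; exact hGmono (by linarith)
    filter_upwards [hmem] with y hy
    have hsub : Set.Ioo (G (βv - δ)) (G (βv + δ)) ⊆ G '' Set.Ioo (βv - δ) (βv + δ) :=
      intermediate_value_Ioo (by linarith) (fun x _ => (hdG x).continuousAt.continuousWithinAt)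
    obtain ⟨ξ, hξI, hξy⟩ := hsub hy
    refine ⟨ξ, trivial, ?_, ?_⟩
    · rw [abs_le]; constructor <;> [linarith [hξI.1]; linarith [hξI.2]]
    · intro b _
      rw [← hξy]
      exact htan ξ b
  have hgs' : ∀ y, gs y = sSup ((fun b => b * y - g b) '' (Set.univ : Set ℝ)) := by
    intro y; rw [hgs y, Set.image_univ]
  obtain ⟨h1, h2⟩ := legendre_core hgs' (Set.mem_univ βv) h3 hsel
  refine ⟨h1, h2, ?_, ?_⟩
  · rw [← hyG, hG]
    exact (lt_div_iff₀ (F0_pos had βv)).2 (by linarith [(F1_bounds had βv).1])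
  · rw [← hyG, hG]
    exact (div_lt_iff₀ (F0_pos had βv)).2 (by linarith [(F1_bounds had βv).2])


lemma bucket_n (Kn : ℝ) (g gs : ℝ → ℝ)
    (hg : ∀ b : ℝ, b < 0 → g b = Real.log (Real.exp (b * Kn) / (-b)))
    (hgs : ∀ y, gs y = sSup ((fun b => b * y - g b) '' Set.Iio 0))
    (βv y₀ : ℝ) (hβv : βv < 0) (hy₀ : deriv g βv = y₀) :
    gs y₀ = βv * y₀ - g βv ∧ HasDerivAt gs βv y₀ ∧ Kn < y₀ := by
  set e : ℝ → ℝ := fun b => b * Kn - Real.log (-b) with he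
  have hge : ∀ b : ℝ, b < 0 → g b = e b := by
    intro b hb
    rw [hg b hb, he]
    rw [Real.log_div (Real.exp_ne_zero _) (by linarith : -b ≠ 0), Real.log_exp]
  have hev : g =ᶠ[nhds βv] e :=
    Filter.eventuallyEq_of_mem (Iio_mem_nhds hβv) (fun b hb => hge b hb)
  have hde : ∀ b : ℝ, b < 0 → HasDerivAt e (Kn - 1 / b) b := by
    intro b hb
    have h1 : HasDerivAt (fun x : ℝ => -x) (-1) b := (hasDerivAt_id b).neg
    have h2 : HasDerivAt (fun x : ℝ => Real.log (-x)) (1 / b) b := by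
      have := h1.log (by linarith : -b ≠ 0)
      convert this using 1
      field_simp
    have h3 := ((hasDerivAt_id b).mul_const Kn).sub h2
    refine h3.congr_deriv ?_
    ring
  have hyval : y₀ = Kn - 1 / βv := by
    rw [← hy₀, hev.deriv_eq, (hde βv hβv).deriv]
  have hKy : Kn < y₀ := by
    have : 1 / βv < 0 := by exact one_div_neg.2 hβv
    rw [hyval]; linarith
  -- the maximizer for a given y > Kn
  have hattain : ∀ y : ℝ, Kn < y → ∀ b ∈ Set.Iio (0:ℝ),
      b * y - g b ≤ (1 / (Kn - y)) * y - g (1 / (Kn - y)) := by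
    intro y hy b hb
    have hb' : b < 0 := hb
    have hKny : Kn - y < 0 := by linarith
    have hξ : 1 / (Kn - y) < 0 := one_div_neg.2 hKny
    rw [hge b hb', hge _ hξ, he]
    simp only
    have hlogξ : Real.log (-(1 / (Kn - y))) = -Real.log (y - Kn) := by
      rw [show -(1 / (Kn - y)) = 1 / (y - Kn) by rw [one_div, one_div, ← inv_neg, neg_sub]]
      rw [one_div, Real.log_inv]
    have hlogu : Real.log ((-b) * (y - Kn)) ≤ (-b) * (y - Kn) - 1 :=
      Real.log_le_sub_one_of_pos (by nlinarith)
    rw [Real.log_mul (by linarith) (by linarith)] at hlogu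
    have hm0 : (1 / (Kn - y)) * y - (1 / (Kn - y)) * Kn = (y - Kn) / (Kn - y) := by ring
    have hm1 : (1 / (Kn - y)) * y - (1 / (Kn - y)) * Kn = -1 := by
      rw [hm0, div_eq_iff (ne_of_lt hKny)]; ring
    have hξy : (1 / (Kn - y)) * y - ((1 / (Kn - y)) * Kn - Real.log (-(1 / (Kn - y))))
        = -1 - Real.log (y - Kn) := by
      rw [hlogξ]; linarith [hm1]
    rw [hξy]
    nlinarith [hlogu]
  have hβξ : 1 / (Kn - y₀) = βv := by
    rw [hyval, show Kn - (Kn - 1 / βv) = 1 / βv by ring, one_div_one_div]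
  have h3 : ∀ b ∈ Set.Iio (0:ℝ), b * y₀ - g b ≤ βv * y₀ - g βv := by
    intro b hb
    have := hattain y₀ hKy b hb
    rwa [hβξ] at this
  have hsel : ∀ δ > (0:ℝ), ∀ᶠ y in nhds y₀,
      ∃ ξ ∈ Set.Iio (0:ℝ), |ξ - βv| ≤ δ ∧ ∀ b ∈ Set.Iio (0:ℝ), b * y - g b ≤ ξ * y - g ξ := by
    intro δ hδ
    have hKn0 : Kn - y₀ ≠ 0 := ne_of_lt (by linarith)
    have hcont : ContinuousAt (fun y => 1 / (Kn - y)) y₀ :=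
      ContinuousAt.div continuousAt_const (continuousAt_const.sub continuousAt_id) hKn0
    have htend : Filter.Tendsto (fun y => 1 / (Kn - y)) (nhds y₀) (nhds βv) := by
      have := hcont.tendsto
      rwa [hβξ] at this
    have h1 := htend (Metric.closedBall_mem_nhds βv hδ)
    filter_upwards [h1, Ioi_mem_nhds hKy] with y hy1 hy2
    have hy2' : Kn < y := hy2
    have hd : |1 / (Kn - y) - βv| ≤ δ := by
      simpa [Metric.mem_closedBall, Real.dist_eq] using hy1
    exact ⟨1 / (Kn - y), Set.mem_Iio.2 (one_div_neg.2 (sub_neg.2 hy2')), hd, hattain y hy2'⟩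
  obtain ⟨h1, h2⟩ := legendre_core hgs (Set.mem_Iio.2 hβv) h3 hsel
  exact ⟨h1, h2, hKy⟩

end Stmt10Aux

open Stmt10Aux in
/-- Sensitivity of the maximum entropy `H` with respect to digital prices:
`∂H/∂D_i = [ln p_{i-1} - c_{i-1}(β_{i-1}) + β_{i-1} K_i] - [ln p_i - c_i(β_i) + β_i K_i]`,
i.e. `∂H/∂D_i = ln g_D(K_i-) - ln g_D(K_i+)`. -/
theorem stmt_10 (n : ℕ) (hn : 1 ≤ n)
    (K : ℕ → ℝ) (hK0 : K 0 = 0) (hKmono : ∀ i < n, K i < K (i + 1))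
    (C : ℕ → ℝ) (hCdec : ∀ i ≤ n, C (i + 1) < C i) (hClast : C (n + 1) = 0)
    -- the functions c_i and their Legendre transforms c_i*
    (c : ℕ → ℝ → ℝ)
    (hc : ∀ i < n, ∀ b : ℝ, c i b = Real.log (∫ x in K i..K (i + 1), Real.exp (b * x)))
    (hcn : ∀ b : ℝ, b < 0 → c n b = Real.log (Real.exp (b * K n) / (-b)))
    (cstar : ℕ → ℝ → ℝ)
    (hcstar : ∀ i < n, ∀ y : ℝ, cstar i y = sSup (Set.range fun b => b * y - c i b))
    (hcstarn : ∀ y : ℝ, cstar n y = sSup ((fun b => b * y - c n b) '' Set.Iio 0))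
    -- the entropy function H expressed in terms of market data
    (H : (ℕ → ℝ) → ℝ)
    (hH : ∀ E : ℕ → ℝ, E 0 = 1 → E (n + 1) = 0 →
      H E = -(∑ i ∈ Finset.range (n + 1),
              (E i - E (i + 1)) * Real.log (E i - E (i + 1))) -
            ∑ i ∈ Finset.range (n + 1),
              (E i - E (i + 1)) *
                cstar i (((C i + K i * E i) - (C (i + 1) + K (i + 1) * E (i + 1))) /
                  (E i - E (i + 1))))
    -- a point D in the open rectangle Ω of arbitrage-free digital prices
    (D : ℕ → ℝ) (hD0 : D 0 = 1) (hDlast : D (n + 1) = 0)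
    (hΩlow : ∀ i, 1 ≤ i → i < n → -((C (i + 1) - C i) / (K (i + 1) - K i)) < D i)
    (hΩlown : 0 < D n)
    (hΩup : ∀ i, 1 ≤ i → i ≤ n → D i < -((C i - C (i - 1)) / (K i - K (i - 1))))
    -- bucket probabilities, conditional means, and the exponents β_i at D
    (p Kbar : ℕ → ℝ)
    (hp : ∀ i ≤ n, p i = D i - D (i + 1))
    (hKbar : ∀ i ≤ n,
      Kbar i = ((C i + K i * D i) - (C (i + 1) + K (i + 1) * D (i + 1))) / p i)
    (β : ℕ → ℝ) (hβ : ∀ i ≤ n, deriv (c i) (β i) = Kbar i) (hβn : β n < 0) :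
    ∀ i, 1 ≤ i → i ≤ n →
      deriv (fun t => H (Function.update D i t)) (D i) =
        (Real.log (p (i - 1)) - c (i - 1) (β (i - 1)) + β (i - 1) * K i) -
          (Real.log (p i) - c i (β i) + β i * K i) := by
  intro i hi1 hin
  obtain ⟨k, rfl⟩ : ∃ k, i = k + 1 := ⟨i - 1, (Nat.succ_pred_eq_of_pos hi1).symm⟩
  simp only [Nat.add_sub_cancel]
  have hkn : k + 1 ≤ n := hin
  -- nonnegativity of strikes
  have hKnn : ∀ j, j ≤ n → 0 ≤ K j := by
    intro j hj
    induction j with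
    | zero => simp [hK0]
    | succ m ih =>
      have h1 := hKmono m (by omega)
      have h2 := ih (by omega)
      linarith
  -- Legendre transform facts for each bucket
  have hbucket : ∀ j, j ≤ n → HasDerivAt (cstar j) (β j) (Kbar j) ∧
      cstar j (Kbar j) = β j * Kbar j - c j (β j) ∧ K j < Kbar j := by
    intro j hj
    rcases eq_or_lt_of_le hj with hj' | hj'
    · subst hj'
      obtain ⟨h1, h2, h3⟩ := bucket_n (K j) (c j) (cstar j) hcn hcstarn (β j) (Kbar j)
        hβn (hβ j le_rfl)
      exact ⟨h2, h1, h3⟩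
    · obtain ⟨h1, h2, h3, _⟩ := bucket_lt (hKmono j hj') (c j) (cstar j) (hc j hj')
        (hcstar j hj') (β j) (Kbar j) (hβ j hj)
      exact ⟨h2, h1, h3⟩
  -- positivity of bucket probabilities
  have hppos : ∀ j, j ≤ n → 0 < p j := by
    intro j hj
    rcases eq_or_lt_of_le hj with hj' | hj'
    · subst hj'
      rw [hp j le_rfl, hDlast, sub_zero]
      exact hΩlown
    · have hKb := (hbucket j hj).2.2
      have hKd : 0 < K (j + 1) - K j := by linarith [hKmono j hj']
      have hup := hΩup (j + 1) (by omega) (by omega)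
      simp only [Nat.add_sub_cancel] at hup
      have hx : -((C (j + 1) - C j) / (K (j + 1) - K j))
          = (C j - C (j + 1)) / (K (j + 1) - K j) := by
        rw [← neg_div]; congr 1; ring
      rw [hx] at hup
      have hub := (lt_div_iff₀ hKd).1 hup
      have hN : 0 < (C j - C (j + 1)) - (K (j + 1) - K j) * D (j + 1) := by nlinarith
      have hN' : (C j - C (j + 1)) - (K (j + 1) - K j) * D (j + 1)
          = ((C j + K j * D j) - (C (j + 1) + K (j + 1) * D (j + 1))) - K j * p j := by
        rw [hp j hj]; ring
      have hpne : p j ≠ 0 := by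
        intro h0
        rw [hKbar j hj, h0, div_zero] at hKb
        linarith [hKnn j hj]
      rcases lt_trichotomy (p j) 0 with hneg | h0 | hposs
      · exfalso
        rw [hKbar j hj] at hKb
        have h2 := (lt_div_iff_of_neg hneg).1 hKb
        nlinarith
      · exact absurd h0 hpne
      · exact hposs
  have hpk := hppos k (by omega)
  have hpk1 := hppos (k + 1) hkn
  obtain ⟨hdk, hvk, _⟩ := hbucket k (by omega)
  obtain ⟨hdk1, hvk1, _⟩ := hbucket (k + 1) hkn
  have hqk : D k - D (k + 1) = p k := (hp k (by omega)).symm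
  have hqk1 : D (k + 1) - D (k + 2) = p (k + 1) := (hp (k + 1) hkn).symm
  have hmk : ((C k + K k * D k) - (C (k + 1) + K (k + 1) * D (k + 1))) / (D k - D (k + 1))
      = Kbar k := by rw [hqk, ← hKbar k (by omega)]
  have hmk1 : ((C (k + 1) + K (k + 1) * D (k + 1)) - (C (k + 2) + K (k + 2) * D (k + 2)))
      / (D (k + 1) - D (k + 2)) = Kbar (k + 1) := by
    rw [hqk1, ← hKbar (k + 1) hkn]
  -- rewrite the entropy along the line
  have hφ : (fun t => H (Function.update D (k + 1) t)) = fun t =>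
      -(∑ j ∈ Finset.range (n + 1),
          (Function.update D (k + 1) t j - Function.update D (k + 1) t (j + 1)) *
            Real.log (Function.update D (k + 1) t j - Function.update D (k + 1) t (j + 1))) -
        ∑ j ∈ Finset.range (n + 1),
          (Function.update D (k + 1) t j - Function.update D (k + 1) t (j + 1)) *
            cstar j (((C j + K j * Function.update D (k + 1) t j) -
              (C (j + 1) + K (j + 1) * Function.update D (k + 1) t (j + 1))) /
              (Function.update D (k + 1) t j - Function.update D (k + 1) t (j + 1))) := by
    funext t
    exact hH (Function.update D (k + 1) t)
      (by rw [Function.update_of_ne (show (0:ℕ) ≠ k + 1 by omega)]; exact hD0)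
      (by rw [Function.update_of_ne (show n + 1 ≠ k + 1 by omega)]; exact hDlast)
  rw [hφ]
  -- derivative of the entropy part
  have hAder : HasDerivAt (fun t =>
      ∑ j ∈ Finset.range (n + 1),
        (Function.update D (k + 1) t j - Function.update D (k + 1) t (j + 1)) *
          Real.log (Function.update D (k + 1) t j - Function.update D (k + 1) t (j + 1)))
      (∑ j ∈ Finset.range (n + 1),
        (if j = k then (-1) * Real.log (p k) + (-1)
         else if j = k + 1 then 1 * Real.log (p (k + 1)) + 1 else 0)) (D (k + 1)) := by
    apply HasDerivAt.fun_sum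
    intro j hj
    rcases eq_or_ne j k with rfl | hjk
    · rw [if_pos rfl]
      have hfe : (fun t => (Function.update D (j + 1) t j - Function.update D (j + 1) t (j + 1)) *
          Real.log (Function.update D (j + 1) t j - Function.update D (j + 1) t (j + 1)))
          = fun t => (D j - t) * Real.log (D j - t) := by
        funext t
        rw [Function.update_self, Function.update_of_ne (show j ≠ j + 1 by omega)]
      rw [hfe]
      exact mul_log_deriv ((hasDerivAt_id (D (j + 1))).const_sub (D j)) hqk (ne_of_gt hpk)
    rcases eq_or_ne j (k + 1) with rfl | hjk1
    · rw [if_neg hjk, if_pos rfl]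
      have hfe : (fun t => (Function.update D (k + 1) t (k + 1) - Function.update D (k + 1) t (k + 1 + 1)) *
          Real.log (Function.update D (k + 1) t (k + 1) - Function.update D (k + 1) t (k + 1 + 1)))
          = fun t => (t - D (k + 2)) * Real.log (t - D (k + 2)) := by
        funext t
        rw [Function.update_self, Function.update_of_ne (show k + 1 + 1 ≠ k + 1 by omega)]
      rw [hfe]
      exact mul_log_deriv ((hasDerivAt_id (D (k + 1))).sub_const (D (k + 2))) hqk1 (ne_of_gt hpk1)
    · rw [if_neg hjk, if_neg hjk1]
      have hfe : (fun t => (Function.update D (k + 1) t j - Function.update D (k + 1) t (j + 1)) *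
          Real.log (Function.update D (k + 1) t j - Function.update D (k + 1) t (j + 1)))
          = fun _ => (D j - D (j + 1)) * Real.log (D j - D (j + 1)) := by
        funext t
        rw [Function.update_of_ne hjk1, Function.update_of_ne (show j + 1 ≠ k + 1 by omega)]
      rw [hfe]
      exact hasDerivAt_const _ _
  -- derivative of the cross-entropy part
  have hBder : HasDerivAt (fun t =>
      ∑ j ∈ Finset.range (n + 1),
        (Function.update D (k + 1) t j - Function.update D (k + 1) t (j + 1)) *
          cstar j (((C j + K j * Function.update D (k + 1) t j) -
            (C (j + 1) + K (j + 1) * Function.update D (k + 1) t (j + 1))) /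
            (Function.update D (k + 1) t j - Function.update D (k + 1) t (j + 1))))
      (∑ j ∈ Finset.range (n + 1),
        (if j = k then (-1) * cstar k (Kbar k) + β k * (-(K (k + 1)) - (-1) * Kbar k)
         else if j = k + 1 then
           1 * cstar (k + 1) (Kbar (k + 1)) + β (k + 1) * (K (k + 1) - 1 * Kbar (k + 1))
         else 0)) (D (k + 1)) := by
    apply HasDerivAt.fun_sum
    intro j hj
    rcases eq_or_ne j k with rfl | hjk
    · rw [if_pos rfl]
      have hfe : (fun t => (Function.update D (j + 1) t j - Function.update D (j + 1) t (j + 1)) *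
          cstar j (((C j + K j * Function.update D (j + 1) t j) -
            (C (j + 1) + K (j + 1) * Function.update D (j + 1) t (j + 1))) /
            (Function.update D (j + 1) t j - Function.update D (j + 1) t (j + 1))))
          = fun t => (D j - t) *
              cstar j (((C j + K j * D j) - (C (j + 1) + K (j + 1) * t)) / (D j - t)) := by
        funext t
        rw [Function.update_self, Function.update_of_ne (show j ≠ j + 1 by omega)]
      rw [hfe]
      have hu : HasDerivAt (fun t : ℝ => (C j + K j * D j) - (C (j + 1) + K (j + 1) * t))
          (-(K (j + 1))) (D (j + 1)) := by
        simpa using (((hasDerivAt_id (D (j + 1))).const_mul (K (j + 1))).const_add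
          (C (j + 1))).const_sub (C j + K j * D j)
      exact comp_term ((hasDerivAt_id (D (j + 1))).const_sub (D j)) hu
        (by show D j - D (j + 1) ≠ 0
            rw [hqk]; exact ne_of_gt hpk)
        hmk hdk
    rcases eq_or_ne j (k + 1) with rfl | hjk1
    · rw [if_neg hjk, if_pos rfl]
      have hfe : (fun t => (Function.update D (k + 1) t (k + 1) - Function.update D (k + 1) t (k + 1 + 1)) *
          cstar (k + 1) (((C (k + 1) + K (k + 1) * Function.update D (k + 1) t (k + 1)) -
            (C (k + 1 + 1) + K (k + 1 + 1) * Function.update D (k + 1) t (k + 1 + 1))) /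
            (Function.update D (k + 1) t (k + 1) - Function.update D (k + 1) t (k + 1 + 1))))
          = fun t => (t - D (k + 2)) *
              cstar (k + 1) (((C (k + 1) + K (k + 1) * t) - (C (k + 2) + K (k + 2) * D (k + 2))) /
                (t - D (k + 2))) := by
        funext t
        rw [Function.update_self, Function.update_of_ne (show k + 1 + 1 ≠ k + 1 by omega)]
      rw [hfe]
      have hu : HasDerivAt (fun t : ℝ => (C (k + 1) + K (k + 1) * t) - (C (k + 2) + K (k + 2) * D (k + 2)))
          (K (k + 1)) (D (k + 1)) := by
        simpa using (((hasDerivAt_id (D (k + 1))).const_mul (K (k + 1))).const_add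
          (C (k + 1))).sub_const (C (k + 2) + K (k + 2) * D (k + 2))
      exact comp_term ((hasDerivAt_id (D (k + 1))).sub_const (D (k + 2))) hu
        (by show D (k + 1) - D (k + 2) ≠ 0
            rw [hqk1]; exact ne_of_gt hpk1)
        hmk1 hdk1
    · rw [if_neg hjk, if_neg hjk1]
      have hfe : (fun t => (Function.update D (k + 1) t j - Function.update D (k + 1) t (j + 1)) *
          cstar j (((C j + K j * Function.update D (k + 1) t j) -
            (C (j + 1) + K (j + 1) * Function.update D (k + 1) t (j + 1))) /
            (Function.update D (k + 1) t j - Function.update D (k + 1) t (j + 1))))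
          = fun _ => (D j - D (j + 1)) *
              cstar j (((C j + K j * D j) - (C (j + 1) + K (j + 1) * D (j + 1))) /
                (D j - D (j + 1))) := by
        funext t
        rw [Function.update_of_ne hjk1, Function.update_of_ne (show j + 1 ≠ k + 1 by omega)]
      rw [hfe]
      exact hasDerivAt_const _ _
  have htwo : ∀ x y : ℝ,
      (∑ j ∈ Finset.range (n + 1), (if j = k then x else if j = k + 1 then y else 0)) = x + y := by
    intro x y
    rw [← Finset.sum_subset (show ({k, k + 1} : Finset ℕ) ⊆ Finset.range (n + 1) by
        intro z hz
        simp only [Finset.mem_insert, Finset.mem_singleton] at hz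
        rcases hz with rfl | rfl <;> (apply Finset.mem_range.2; omega))
      (by
        intro z _ hz
        simp only [Finset.mem_insert, Finset.mem_singleton] at hz
        push_neg at hz
        rw [if_neg hz.1, if_neg hz.2])]
    rw [Finset.sum_pair (show k ≠ k + 1 by omega)]
    simp [Nat.succ_ne_self]
  rw [(hAder.fun_neg.fun_sub hBder).deriv, htwo, htwo, hvk, hvk1]
  ring
end

section
/- With the setup of the entropy function H on the space Ω of arbitrage-free digital prices matching fixed call prices, the Hessian of H at any D ∈ Ω is symmetric tridiagonal with diagonal entries ∂²H/∂D_i² = −1/p_{i−1} − 1/p_i − (K_i − K̄_{i−1})²/(p_{i−1} c_{i−1}''(β_{i−1})) − (K̄_i − K_i)²/(p_i c_i''(β_i)) and off-diagonal entries ∂²H/∂D_i ∂D_{i+1} = 1/p_i − (K̄_i − K_i)(K_{i+1} − K̄_i)/(p_i c_i''(β_i)). -/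
open Real Filter Set Topology MeasureTheory intervalIntegral

lemma one' {g u N : ℝ → ℝ} {a κ s₀ u₀ y₀ b₀ : ℝ}
    (hu : HasDerivAt u a s₀) (hN : HasDerivAt N (a * κ) s₀)
    (hu₀ : u s₀ = u₀) (hy₀ : N s₀ / u s₀ = y₀)
    (hupos : 0 < u₀) (hg : HasDerivAt g b₀ y₀) :
    HasDerivAt (fun s => -(u s * Real.log (u s)) - u s * g (N s / u s))
      (-(a * (Real.log u₀ + 1 + g y₀ + b₀ * (κ - y₀)))) s₀ := by
  subst hu₀; subst hy₀
  have hu0' : u s₀ ≠ 0 := ne_of_gt hupos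
  have hy : HasDerivAt (fun s => N s / u s)
      ((a * κ * u s₀ - N s₀ * a) / (u s₀)^2) s₀ := hN.div hu hu0'
  have hlog : HasDerivAt (fun s => Real.log (u s)) (a / u s₀) s₀ := by
    exact hu.log hu0'
  have h1 : HasDerivAt (fun s => u s * Real.log (u s))
      (a * Real.log (u s₀) + u s₀ * (a / u s₀)) s₀ := hu.mul hlog
  have h2 : HasDerivAt (fun s => g (N s / u s))
      (b₀ * ((a * κ * u s₀ - N s₀ * a) / (u s₀)^2)) s₀ := by
    have := hg.comp s₀ hy
    exact this.congr_deriv (by ring)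
  have h3 : HasDerivAt (fun s => u s * g (N s / u s))
      (a * g (N s₀ / u s₀) + u s₀ * (b₀ * ((a * κ * u s₀ - N s₀ * a) / (u s₀)^2))) s₀ :=
    hu.mul h2
  have := (h1.neg).sub h3
  refine this.congr_deriv ?_
  field_simp
  ring

lemma two' {g B u N : ℝ → ℝ} {ε a κ₁ κ₂ s₀ u₀ y₀ βp : ℝ}
    (hu : HasDerivAt u a s₀) (hN : HasDerivAt N (a * κ₁) s₀)
    (hu₀ : u s₀ = u₀) (hy₀ : N s₀ / u s₀ = y₀) (hu0 : u₀ ≠ 0)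
    (hg : HasDerivAt g (B y₀) y₀)
    (hB : HasDerivAt B βp y₀) :
    HasDerivAt (fun s => ε * (Real.log (u s) + 1 + g (N s / u s) +
        B (N s / u s) * (κ₂ - N s / u s)))
      (ε * (a / u₀ + βp * (a * (κ₁ - y₀) / u₀) * (κ₂ - y₀))) s₀ := by
  subst hu₀; subst hy₀
  set y₀ := N s₀ / u s₀ with hy₀
  have hy : HasDerivAt (fun s => N s / u s)
      ((a * κ₁ * u s₀ - N s₀ * a) / (u s₀)^2) s₀ := hN.div hu hu0
  have hyd : (a * κ₁ * u s₀ - N s₀ * a) / (u s₀)^2 = a * (κ₁ - y₀) / u s₀ := by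
    rw [hy₀]; field_simp
  rw [hyd] at hy
  have hlog : HasDerivAt (fun s => Real.log (u s)) (a / u s₀) s₀ := by
    exact hu.log hu0
  have hgy : HasDerivAt (fun s => g (N s / u s)) (B y₀ * (a * (κ₁ - y₀) / u s₀)) s₀ := by
    have := hg.comp s₀ hy
    exact this.congr_deriv (by ring)
  have hBy : HasDerivAt (fun s => B (N s / u s)) (βp * (a * (κ₁ - y₀) / u s₀)) s₀ := by
    have := hB.comp s₀ hy
    exact this.congr_deriv (by ring)
  have hprod : HasDerivAt (fun s => B (N s / u s) * (κ₂ - N s / u s))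
      (βp * (a * (κ₁ - y₀) / u s₀) * (κ₂ - y₀) + B y₀ * (-(a * (κ₁ - y₀) / u s₀))) s₀ := by
    exact hBy.mul ((hy.const_sub κ₂))
  have hsum := (((hlog.add_const 1).add hgy).add hprod).const_mul ε
  refine hsum.congr_deriv ?_
  ring


lemma hasDerivAt_intExp {Ka Kb : ℝ} (φ : ℝ → ℝ) (hφ : Continuous φ) (b₀ : ℝ) :
    HasDerivAt (fun b => ∫ x in Ka..Kb, φ x * Real.exp (b * x))
      (∫ x in Ka..Kb, x * φ x * Real.exp (b₀ * x)) b₀ := by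
  obtain ⟨T, hT⟩ := isCompact_uIcc.exists_bound_of_continuousOn
    (continuous_id.continuousOn (s := Set.uIcc Ka Kb))
  obtain ⟨Cb, hCb⟩ := isCompact_uIcc.exists_bound_of_continuousOn
    ((continuous_id.mul hφ).continuousOn (s := Set.uIcc Ka Kb))
  have hT0 : 0 ≤ T := le_trans (norm_nonneg _) (hT Ka left_mem_uIcc)
  have hCb0 : 0 ≤ Cb := le_trans (norm_nonneg _) (hCb Ka left_mem_uIcc)
  have key := intervalIntegral.hasDerivAt_integral_of_dominated_loc_of_deriv_le
    (F := fun b t => φ t * Real.exp (b * t))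
    (F' := fun b t => t * φ t * Real.exp (b * t))
    (a := Ka) (b := Kb) (μ := volume) (x₀ := b₀)
    (bound := fun _ => Cb * Real.exp ((|b₀| + 1) * T))
    (s := Metric.ball b₀ 1) (Metric.ball_mem_nhds b₀ one_pos)
    (Filter.Eventually.of_forall (fun x =>
      ((hφ.mul (Real.continuous_exp.comp (continuous_const.mul continuous_id))).aestronglyMeasurable).restrict))
    ((hφ.mul (Real.continuous_exp.comp (continuous_const.mul continuous_id))).intervalIntegrable _ _)
    (((continuous_id.mul hφ).mul (Real.continuous_exp.comp (continuous_const.mul continuous_id))).aestronglyMeasurable).restrict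
    ?_ (intervalIntegrable_const) ?_
  · exact key.2
  · refine Filter.Eventually.of_forall (fun t ht x hx => ?_)
    have htI : t ∈ Set.uIcc Ka Kb := Set.uIoc_subset_uIcc ht
    have h1 : ‖t * φ t‖ ≤ Cb := hCb t htI
    have h2 : Real.exp (x * t) ≤ Real.exp ((|b₀| + 1) * T) := by
      apply Real.exp_le_exp.2
      have hxb : |x| ≤ |b₀| + 1 := by
        have := mem_ball_iff_norm.1 hx
        have : |x - b₀| < 1 := by simpa [Real.norm_eq_abs] using this
        calc |x| = |x - b₀ + b₀| := by ring_nf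
        _ ≤ |x - b₀| + |b₀| := abs_add_le _ _
        _ ≤ |b₀| + 1 := by linarith
      have htT : |t| ≤ T := by simpa [Real.norm_eq_abs] using hT t htI
      calc x * t ≤ |x * t| := le_abs_self _
      _ = |x| * |t| := abs_mul _ _
      _ ≤ (|b₀| + 1) * T := by
          apply mul_le_mul hxb htT (abs_nonneg _) (by positivity)
    calc ‖t * φ t * Real.exp (x * t)‖ = ‖t * φ t‖ * Real.exp (x * t) := by
          rw [norm_mul]; simp [Real.norm_eq_abs, abs_of_pos (Real.exp_pos _)]
    _ ≤ Cb * Real.exp ((|b₀| + 1) * T) :=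
        mul_le_mul h1 h2 (le_of_lt (Real.exp_pos _)) hCb0
  · refine Filter.Eventually.of_forall (fun t ht x hx => ?_)
    have : HasDerivAt (fun b => b * t) t x := by
      simpa using (hasDerivAt_id x).mul_const t
    have := (this.exp).const_mul (φ t)
    refine this.congr_deriv ?_
    ring

lemma seg_pack {Ka Kb : ℝ} (hab : Ka < Kb) (c g : ℝ → ℝ)
    (hc : ∀ b, c b = Real.log (∫ x in Ka..Kb, Real.exp (b * x)))
    (hg : ∀ y, g y = sSup (Set.range fun b => b * y - c b)) (β : ℝ) :
    ∃ B : ℝ → ℝ, ∃ U : Set ℝ, IsOpen U ∧ deriv c β ∈ U ∧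
      (∀ y ∈ U, HasDerivAt g (B y) y) ∧ B (deriv c β) = β ∧
      0 < deriv (deriv c) β ∧ HasDerivAt B ((deriv (deriv c) β))⁻¹ (deriv c β) ∧
      Ka < deriv c β ∧ deriv c β < Kb := by
  classical
  set Z : ℝ → ℝ := fun b => ∫ x in Ka..Kb, Real.exp (b * x) with hZ
  set Z₁ : ℝ → ℝ := fun b => ∫ x in Ka..Kb, x * Real.exp (b * x) with hZ₁
  set Z₂ : ℝ → ℝ := fun b => ∫ x in Ka..Kb, x * x * Real.exp (b * x) with hZ₂
  have hexp_cont : ∀ b : ℝ, Continuous fun x : ℝ => Real.exp (b * x) := fun b =>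
    Real.continuous_exp.comp (continuous_const.mul continuous_id)
  have hZpos : ∀ b, 0 < Z b := by
    intro b
    exact intervalIntegral_pos_of_pos ((hexp_cont b).intervalIntegrable _ _)
      (fun x => Real.exp_pos _) hab
  have hZne : ∀ b, Z b ≠ 0 := fun b => ne_of_gt (hZpos b)
  have hZd : ∀ b, HasDerivAt Z (Z₁ b) b := by
    intro b
    have := hasDerivAt_intExp (Ka := Ka) (Kb := Kb) (fun _ => 1) continuous_const b
    simpa [hZ, hZ₁] using this
  have hZ₁d : ∀ b, HasDerivAt Z₁ (Z₂ b) b := by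
    intro b
    have := hasDerivAt_intExp (Ka := Ka) (Kb := Kb) (fun x => x) continuous_id b
    simpa [hZ₁, hZ₂] using this
  -- c and its derivatives
  have hceq : c = fun b => Real.log (Z b) := funext fun b => hc b
  set c' : ℝ → ℝ := fun b => Z₁ b / Z b with hc'
  have hcd : ∀ b, HasDerivAt c (c' b) b := by
    intro b
    rw [hceq]
    exact (hZd b).log (hZne b)
  set σf : ℝ → ℝ := fun b => (Z₂ b * Z b - Z₁ b * Z₁ b) / (Z b)^2 with hσf
  have hc'd : ∀ b, HasDerivAt c' (σf b) b := fun b => (hZ₁d b).div (hZd b) (hZne b)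
  -- strict integral bounds : Ka * Z < Z₁ < Kb * Z
  have hi1 : ∀ (b u v : ℝ), IntervalIntegrable (fun x : ℝ => x * Real.exp (b * x)) volume u v :=
    fun b u v => ((by fun_prop : Continuous fun x : ℝ => x * Real.exp (b * x))).intervalIntegrable _ _
  have hi2 : ∀ (b u v : ℝ), IntervalIntegrable (fun x : ℝ => x * x * Real.exp (b * x)) volume u v :=
    fun b u v => ((by fun_prop : Continuous fun x : ℝ => x * x * Real.exp (b * x))).intervalIntegrable _ _
  have hIa : ∀ b, Ka * Z b < Z₁ b := by
    intro b
    have hpos : 0 < ∫ x in Ka..Kb, (x - Ka) * Real.exp (b * x) := by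
      apply intervalIntegral_pos_of_pos_on
        (f := fun x : ℝ => (x - Ka) * Real.exp (b * x))
        (((by fun_prop : Continuous fun x : ℝ => (x - Ka) * Real.exp (b * x))).intervalIntegrable _ _)
        (fun x hx => mul_pos (by linarith [hx.1]) (Real.exp_pos _)) hab
    have hsub : (∫ x in Ka..Kb, (x - Ka) * Real.exp (b * x))
        = Z₁ b - Ka * Z b := by
      simp only [hZ₁, hZ]
      rw [← intervalIntegral.integral_const_mul,
        ← intervalIntegral.integral_sub (hi1 b Ka Kb)
          (((by fun_prop : Continuous fun x : ℝ => Ka * Real.exp (b * x))).intervalIntegrable _ _)]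
      congr 1
      ext x
      ring
    linarith [hsub ▸ hpos]
  have hIb : ∀ b, Z₁ b < Kb * Z b := by
    intro b
    have hpos : 0 < ∫ x in Ka..Kb, (Kb - x) * Real.exp (b * x) := by
      apply intervalIntegral_pos_of_pos_on
        (f := fun x : ℝ => (Kb - x) * Real.exp (b * x))
        (((by fun_prop : Continuous fun x : ℝ => (Kb - x) * Real.exp (b * x))).intervalIntegrable _ _)
        (fun x hx => mul_pos (by linarith [hx.2]) (Real.exp_pos _)) hab
    have hsub : (∫ x in Ka..Kb, (Kb - x) * Real.exp (b * x))
        = Kb * Z b - Z₁ b := by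
      simp only [hZ₁, hZ]
      rw [← intervalIntegral.integral_const_mul,
        ← intervalIntegral.integral_sub
          (((by fun_prop : Continuous fun x : ℝ => Kb * Real.exp (b * x))).intervalIntegrable _ _)
          (hi1 b Ka Kb)]
      congr 1
      ext x
      ring
    linarith [hsub ▸ hpos]
  -- variance positivity
  have hvar : ∀ b, 0 < Z₂ b * Z b - Z₁ b * Z₁ b := by
    intro b
    set m : ℝ := Z₁ b / Z b with hm
    have hVint : ∀ (u v : ℝ), (∫ x in u..v, (x - m)^2 * Real.exp (b * x))
        = (∫ x in u..v, x * x * Real.exp (b * x)) - 2 * m * (∫ x in u..v, x * Real.exp (b * x))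
          + m^2 * (∫ x in u..v, Real.exp (b * x)) := by
      intro u v
      rw [← intervalIntegral.integral_const_mul (2 * m) (fun x : ℝ => x * Real.exp (b * x)),
        ← intervalIntegral.integral_const_mul (m ^ 2) (fun x : ℝ => Real.exp (b * x)),
        ← intervalIntegral.integral_sub (hi2 b u v)
          (((by fun_prop : Continuous fun x : ℝ => 2 * m * (x * Real.exp (b * x)))).intervalIntegrable _ _),
        ← intervalIntegral.integral_add
          (((by fun_prop : Continuous fun x : ℝ =>
              x * x * Real.exp (b * x) - 2 * m * (x * Real.exp (b * x)))).intervalIntegrable _ _)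
          (((by fun_prop : Continuous fun x : ℝ => m ^ 2 * Real.exp (b * x))).intervalIntegrable _ _)]
      congr 1
      ext x
      ring
    have hVpos : 0 < ∫ x in Ka..Kb, (x - m)^2 * Real.exp (b * x) := by
      set t₀ : ℝ := (Ka + Kb)/2 with ht₀
      have h1 : Ka < t₀ := by rw [ht₀]; linarith
      have h2 : t₀ < Kb := by rw [ht₀]; linarith
      have hint : ∀ (u v : ℝ), IntervalIntegrable (fun x : ℝ => (x - m)^2 * Real.exp (b * x)) volume u v :=
        fun u v => ((by fun_prop : Continuous fun x : ℝ => (x - m)^2 * Real.exp (b * x))).intervalIntegrable _ _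
      have hsplit : (∫ x in Ka..Kb, (x - m)^2 * Real.exp (b * x))
          = (∫ x in Ka..t₀, (x - m)^2 * Real.exp (b * x))
            + ∫ x in t₀..Kb, (x - m)^2 * Real.exp (b * x) :=
        (intervalIntegral.integral_add_adjacent_intervals (hint Ka t₀) (hint t₀ Kb)).symm
      rcases le_or_gt m t₀ with hm' | hm'
      · have hp2 : 0 < ∫ x in t₀..Kb, (x - m)^2 * Real.exp (b * x) := by
          apply intervalIntegral_pos_of_pos_on (hint t₀ Kb)
            (fun x hx => mul_pos (by nlinarith [hx.1, hx.2]) (Real.exp_pos _)) h2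
        have hp1 : 0 ≤ ∫ x in Ka..t₀, (x - m)^2 * Real.exp (b * x) :=
          intervalIntegral.integral_nonneg (le_of_lt h1)
            (fun u _ => mul_nonneg (sq_nonneg _) (le_of_lt (Real.exp_pos _)))
        linarith [hsplit]
      · have hp1 : 0 < ∫ x in Ka..t₀, (x - m)^2 * Real.exp (b * x) := by
          apply intervalIntegral_pos_of_pos_on (hint Ka t₀)
            (fun x hx => mul_pos (by nlinarith [hx.1, hx.2]) (Real.exp_pos _)) h1
        have hp2 : 0 ≤ ∫ x in t₀..Kb, (x - m)^2 * Real.exp (b * x) :=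
          intervalIntegral.integral_nonneg (le_of_lt h2)
            (fun u _ => mul_nonneg (sq_nonneg _) (le_of_lt (Real.exp_pos _)))
        linarith [hsplit]
    have hexpand : (∫ x in Ka..Kb, (x - m)^2 * Real.exp (b * x))
        = Z₂ b - 2 * m * Z₁ b + m^2 * Z b := hVint Ka Kb
    have hmZ : m * Z b = Z₁ b := div_mul_cancel₀ _ (hZne b)
    have : 0 < Z b * (Z₂ b - 2 * m * Z₁ b + m^2 * Z b) :=
      mul_pos (hZpos b) (hexpand ▸ hVpos)
    nlinarith [this, hmZ]
  have hσpos : ∀ b, 0 < σf b := by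
    intro b
    rw [hσf]
    apply div_pos (by nlinarith [hvar b]) (pow_pos (hZpos b) 2)
  -- strict monotonicity of c'
  have hc'mono : StrictMono c' := by
    apply strictMono_of_deriv_pos
    intro b
    rw [(hc'd b).deriv]
    exact hσpos b
  have hc'cont : Continuous c' := by
    have : Differentiable ℝ c' := fun b => (hc'd b).differentiableAt
    exact this.continuous
  -- the derivative values in the statement
  have hdc : deriv c β = c' β := (hcd β).deriv
  have hddc : deriv (deriv c) β = σf β := by
    have h1 : deriv c = c' := funext fun b => (hcd b).deriv
    rw [h1, (hc'd β).deriv]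
  -- the inverse function B
  set U : Set ℝ := Ioo (c' (β - 1)) (c' (β + 1)) with hU
  set B : ℝ → ℝ := Function.invFun c' with hB
  have hUopen : IsOpen U := isOpen_Ioo
  have hymem : c' β ∈ U := ⟨hc'mono (by linarith), hc'mono (by linarith)⟩
  have hsurj : ∀ y ∈ U, ∃ b, c' b = y := by
    intro y hy
    have h1 : y ∈ Icc (c' (β - 1)) (c' (β + 1)) := ⟨le_of_lt hy.1, le_of_lt hy.2⟩
    have := intermediate_value_Icc (by linarith : β - 1 ≤ β + 1) (hc'cont.continuousOn)
    obtain ⟨b, _, hb⟩ := this h1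
    exact ⟨b, hb⟩
  have hBev : ∀ y ∈ U, c' (B y) = y := fun y hy => Function.invFun_eq (hsurj y hy)
  have hBleft : ∀ b, B (c' b) = b := fun b =>
    Function.leftInverse_invFun hc'mono.injective b
  -- tangent line inequality
  have htangent : ∀ b x : ℝ, c' b * (x - b) ≤ c x - c b := by
    intro b x
    rcases lt_trichotomy x b with hxb | hxb | hxb
    · obtain ⟨ξ, hξ, hslope⟩ := exists_hasDerivAt_eq_slope c c' hxb
        (fun z _ => (hcd z).continuousAt.continuousWithinAt)
        (fun z _ => hcd z)
      have hle : c' ξ ≤ c' b := le_of_lt (hc'mono hξ.2)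
      have hbx : 0 < b - x := by linarith
      rw [eq_div_iff (ne_of_gt hbx)] at hslope
      nlinarith
    · subst hxb; simp
    · obtain ⟨ξ, hξ, hslope⟩ := exists_hasDerivAt_eq_slope c c' hxb
        (fun z _ => (hcd z).continuousAt.continuousWithinAt)
        (fun z _ => hcd z)
      have hle : c' b ≤ c' ξ := le_of_lt (hc'mono hξ.1)
      have hbx : 0 < x - b := by linarith
      rw [eq_div_iff (ne_of_gt hbx)] at hslope
      nlinarith
  -- value of g on U
  have hgval : ∀ y ∈ U, g y = B y * y - c (B y) := by
    intro y hy
    rw [hg y]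
    apply IsGreatest.csSup_eq
    constructor
    · exact ⟨B y, rfl⟩
    · rintro z ⟨x, rfl⟩
      have h := htangent (B y) x
      rw [hBev y hy] at h
      show x * y - c x ≤ B y * y - c (B y)
      nlinarith [h]
  -- continuity of B on U
  have hBcont : ∀ y₀ ∈ U, ContinuousAt B y₀ := by
    intro y₀ hy₀
    rw [ContinuousAt]
    apply tendsto_order.2
    constructor
    · intro b' hb'
      have h1 : c' b' < y₀ := by
        have := hc'mono hb'
        rwa [hBev y₀ hy₀] at this
      have hmem' : y₀ ∈ U ∩ Ioi (c' b') := ⟨hy₀, h1⟩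
      filter_upwards [(hUopen.inter isOpen_Ioi).mem_nhds hmem'] with y hy
      have : c' b' < c' (B y) := by rw [hBev y hy.1]; exact hy.2
      exact hc'mono.lt_iff_lt.1 this
    · intro b' hb'
      have h1 : y₀ < c' b' := by
        have := hc'mono hb'
        rwa [hBev y₀ hy₀] at this
      have hmem' : y₀ ∈ U ∩ Iio (c' b') := ⟨hy₀, h1⟩
      filter_upwards [(hUopen.inter isOpen_Iio).mem_nhds hmem'] with y hy
      have : c' (B y) < c' b' := by rw [hBev y hy.1]; exact hy.2
      exact hc'mono.lt_iff_lt.1 this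
  -- derivative of B on U
  have hBd : ∀ y₀ ∈ U, HasDerivAt B (σf (B y₀))⁻¹ y₀ := by
    intro y₀ hy₀
    apply HasDerivAt.of_local_left_inverse (hBcont y₀ hy₀) (hc'd (B y₀))
      (ne_of_gt (hσpos (B y₀)))
    filter_upwards [hUopen.mem_nhds hy₀] with y hy
    exact hBev y hy
  -- derivative of g on U
  have hgd : ∀ y₀ ∈ U, HasDerivAt g (B y₀) y₀ := by
    intro y₀ hy₀
    have hψ : HasDerivAt (fun y => B y * y - c (B y)) (B y₀) y₀ := by
      have h1 : HasDerivAt (fun y => B y * y) ((σf (B y₀))⁻¹ * y₀ + B y₀ * 1) y₀ :=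
        (hBd y₀ hy₀).mul (hasDerivAt_id y₀)
      have h2 : HasDerivAt (fun y => c (B y)) (c' (B y₀) * (σf (B y₀))⁻¹) y₀ :=
        (hcd (B y₀)).comp y₀ (hBd y₀ hy₀)
      have := h1.sub h2
      refine this.congr_deriv ?_
      rw [hBev y₀ hy₀]
      ring
    apply hψ.congr_of_eventuallyEq
    filter_upwards [hUopen.mem_nhds hy₀] with y hy
    exact hgval y hy
  have hBβ : B (deriv c β) = β := by rw [hdc]; exact hBleft β
  refine ⟨B, U, hUopen, by rw [hdc]; exact hymem, hgd, hBβ, ?_, ?_, ?_, ?_⟩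
  · rw [hddc]; exact hσpos β
  · rw [hddc, hdc]
    have := hBd (c' β) hymem
    rwa [hBleft β] at this
  · rw [hdc, hc']
    rw [lt_div_iff₀ (hZpos β)]
    have := hIa β
    linarith
  · rw [hdc, hc']
    rw [div_lt_iff₀ (hZpos β)]
    have := hIb β
    linarith


lemma segn_pack (Kn : ℝ) (c g : ℝ → ℝ)
    (hc : ∀ b : ℝ, b < 0 → c b = Real.log (Real.exp (b * Kn) / (-b)))
    (hg : ∀ y, g y = sSup ((fun b => b * y - c b) '' Set.Iio 0))
    (β : ℝ) (hβneg : β < 0) :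
    ∃ B : ℝ → ℝ, ∃ U : Set ℝ, IsOpen U ∧ deriv c β ∈ U ∧
      (∀ y ∈ U, HasDerivAt g (B y) y) ∧ B (deriv c β) = β ∧
      0 < deriv (deriv c) β ∧ HasDerivAt B ((deriv (deriv c) β))⁻¹ (deriv c β) ∧
      Kn < deriv c β := by
  have hval : ∀ b ∈ Iio (0:ℝ), c b = b * Kn - Real.log (-b) := by
    intro b hb
    rw [hc b hb, Real.log_div (Real.exp_ne_zero _) (neg_ne_zero.2 (ne_of_lt hb)), Real.log_exp]
  have hcd : ∀ b ∈ Iio (0:ℝ), HasDerivAt c (Kn - b⁻¹) b := by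
    intro b hb
    have h1 : HasDerivAt (fun b : ℝ => b * Kn) Kn b := by
      simpa using (hasDerivAt_id b).mul_const Kn
    have h2 : HasDerivAt (fun b : ℝ => Real.log (-b)) b⁻¹ b := by
      have := (Real.hasDerivAt_log (neg_ne_zero.2 (ne_of_lt hb))).comp b (hasDerivAt_neg b)
      refine this.congr_deriv ?_
      rw [inv_neg]
      ring
    refine (h1.sub h2).congr_of_eventuallyEq ?_
    filter_upwards [isOpen_Iio.mem_nhds hb] with z hz
    exact hval z hz
  have hβne : β ≠ 0 := ne_of_lt hβneg
  have hdc : deriv c β = Kn - β⁻¹ := (hcd β hβneg).deriv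
  have hKny : Kn < deriv c β := by
    rw [hdc]
    have h : β⁻¹ < 0 := inv_neg''.mpr hβneg
    linarith
  set B : ℝ → ℝ := fun y => -(y - Kn)⁻¹ with hB
  set U : Set ℝ := Ioi Kn with hU
  have hUopen : IsOpen U := isOpen_Ioi
  have hymem : deriv c β ∈ U := hKny
  have hgval : ∀ y ∈ U, g y = -1 - Real.log (y - Kn) := by
    intro y hy
    have hyK : 0 < y - Kn := sub_pos.2 hy
    rw [hg y]
    apply IsGreatest.csSup_eq
    constructor
    · refine ⟨B y, ?_, ?_⟩
      · show B y < 0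
        rw [hB]
        simp only
        rw [neg_lt, neg_zero]
        exact inv_pos.2 hyK
      · have hBneg : B y < 0 := by
          rw [hB]; simp only
          rw [neg_lt, neg_zero]; exact inv_pos.2 hyK
        show B y * y - c (B y) = -1 - Real.log (y - Kn)
        rw [hval (B y) hBneg]
        have h1 : -(B y) = (y - Kn)⁻¹ := by simp [hB]
        have h2 : Real.log (-(B y)) = -Real.log (y - Kn) := by
          rw [h1, Real.log_inv]
        rw [h2]
        have h3 : B y * (y - Kn) = -1 := by
          rw [hB]
          field_simp
        nlinarith [h3]
    · rintro z ⟨b, hb, rfl⟩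
      have hbneg : b < 0 := hb
      show b * y - c b ≤ -1 - Real.log (y - Kn)
      rw [hval b hb]
      have hyK : 0 < y - Kn := sub_pos.2 hy
      have hu : 0 < (-b) * (y - Kn) := mul_pos (by linarith) hyK
      have hlogb : Real.log (-b) = Real.log ((-b) * (y - Kn)) - Real.log (y - Kn) := by
        rw [Real.log_mul (by linarith) (ne_of_gt hyK)]
        ring
      have hle := Real.log_le_sub_one_of_pos hu
      nlinarith [hle, hlogb]
  have hgd : ∀ y ∈ U, HasDerivAt g (B y) y := by
    intro y hy
    have hyK : 0 < y - Kn := sub_pos.2 hy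
    have h1 : HasDerivAt (fun y : ℝ => Real.log (y - Kn)) (y - Kn)⁻¹ y := by
      have := (Real.hasDerivAt_log (ne_of_gt hyK)).comp y ((hasDerivAt_id y).sub_const Kn)
      exact this.congr_deriv (by simp)
    have h2 : HasDerivAt (fun y : ℝ => -1 - Real.log (y - Kn)) (B y) y := by
      have := h1.const_sub (-1 : ℝ)
      simpa [hB] using this
    refine h2.congr_of_eventuallyEq ?_
    filter_upwards [hUopen.mem_nhds hy] with z hz
    exact hgval z hz
  have hBβ : B (deriv c β) = β := by
    rw [hdc, hB]
    simp only
    rw [show Kn - β⁻¹ - Kn = -β⁻¹ by ring, inv_neg, inv_inv]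
    ring
  have hddc : deriv (deriv c) β = (β^2)⁻¹ := by
    have hev : deriv c =ᶠ[𝓝 β] fun b => Kn - b⁻¹ := by
      filter_upwards [isOpen_Iio.mem_nhds (show β ∈ Iio (0:ℝ) from hβneg)] with z hz
      exact (hcd z hz).deriv
    rw [hev.deriv_eq]
    have h1 : HasDerivAt (fun b : ℝ => Kn - b⁻¹) ((β^2)⁻¹) β := by
      have := (hasDerivAt_inv hβne).const_sub Kn
      refine this.congr_deriv ?_
      ring
    exact h1.deriv
  refine ⟨B, U, hUopen, hymem, hgd, hBβ, ?_, ?_, hKny⟩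
  · rw [hddc]
    exact inv_pos.2 (by positivity)
  · rw [hddc, inv_inv, hdc]
    have hy' : Kn - β⁻¹ - Kn = -β⁻¹ := by ring
    have h1 : HasDerivAt B (β^2) (Kn - β⁻¹) := by
      rw [hB]
      have hne : Kn - β⁻¹ - Kn ≠ 0 := by
        rw [hy']
        exact neg_ne_zero.2 (inv_ne_zero hβne)
      have := ((hasDerivAt_inv hne).comp (Kn - β⁻¹)
        ((hasDerivAt_id (Kn - β⁻¹)).sub_const Kn)).neg
      refine this.congr_deriv ?_
      rw [hy']
      field_simp
    exact h1


/-- The Hessian of the entropy `H` with respect to digital prices is symmetric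
tridiagonal, with
`∂²H/∂D_i² = -1/p_{i-1} - 1/p_i - (K_i - K̄_{i-1})²/(p_{i-1} c_{i-1}''(β_{i-1}))
  - (K̄_i - K_i)²/(p_i c_i''(β_i))` and
`∂²H/∂D_i∂D_{i+1} = 1/p_i - (K̄_i - K_i)(K_{i+1} - K̄_i)/(p_i c_i''(β_i))`. -/
theorem stmt_11 (n : ℕ) (hn : 1 ≤ n)
    (K : ℕ → ℝ) (hK0 : K 0 = 0) (hKmono : ∀ i < n, K i < K (i + 1))
    (C : ℕ → ℝ) (hCdec : ∀ i ≤ n, C (i + 1) < C i) (hClast : C (n + 1) = 0)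
    (c : ℕ → ℝ → ℝ)
    (hc : ∀ i < n, ∀ b : ℝ, c i b = Real.log (∫ x in K i..K (i + 1), Real.exp (b * x)))
    (hcn : ∀ b : ℝ, b < 0 → c n b = Real.log (Real.exp (b * K n) / (-b)))
    (cstar : ℕ → ℝ → ℝ)
    (hcstar : ∀ i < n, ∀ y : ℝ, cstar i y = sSup (Set.range fun b => b * y - c i b))
    (hcstarn : ∀ y : ℝ, cstar n y = sSup ((fun b => b * y - c n b) '' Set.Iio 0))
    (H : (ℕ → ℝ) → ℝ)
    (hH : ∀ E : ℕ → ℝ, E 0 = 1 → E (n + 1) = 0 →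
      H E = -(∑ i ∈ Finset.range (n + 1),
              (E i - E (i + 1)) * Real.log (E i - E (i + 1))) -
            ∑ i ∈ Finset.range (n + 1),
              (E i - E (i + 1)) *
                cstar i (((C i + K i * E i) - (C (i + 1) + K (i + 1) * E (i + 1))) /
                  (E i - E (i + 1))))
    (D : ℕ → ℝ) (hD0 : D 0 = 1) (hDlast : D (n + 1) = 0)
    (hΩlow : ∀ i, 1 ≤ i → i < n → -((C (i + 1) - C i) / (K (i + 1) - K i)) < D i)
    (hΩlown : 0 < D n)
    (hΩup : ∀ i, 1 ≤ i → i ≤ n → D i < -((C i - C (i - 1)) / (K i - K (i - 1))))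
    (p Kbar : ℕ → ℝ)
    (hp : ∀ i ≤ n, p i = D i - D (i + 1))
    (hKbar : ∀ i ≤ n,
      Kbar i = ((C i + K i * D i) - (C (i + 1) + K (i + 1) * D (i + 1))) / p i)
    (β : ℕ → ℝ) (hβ : ∀ i ≤ n, deriv (c i) (β i) = Kbar i) (hβn : β n < 0) :
    -- diagonal entries
    (∀ i, 1 ≤ i → i ≤ n →
      deriv (deriv (fun s => H (Function.update D i s))) (D i) =
        -(1 / p (i - 1)) - 1 / p i -
          (K i - Kbar (i - 1)) ^ 2 / (p (i - 1) * deriv (deriv (c (i - 1))) (β (i - 1))) -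
          (Kbar i - K i) ^ 2 / (p i * deriv (deriv (c i)) (β i))) ∧
    -- off-diagonal entries
    (∀ i, 1 ≤ i → i ≤ n - 1 →
      deriv (fun t =>
          deriv (fun s => H (Function.update (Function.update D (i + 1) t) i s)) (D i))
        (D (i + 1)) =
        1 / p i - (Kbar i - K i) * (K (i + 1) - Kbar i) / (p i * deriv (deriv (c i)) (β i))) ∧
    -- symmetry of the mixed partial derivatives
    (∀ i j, 1 ≤ i → i ≤ n → 1 ≤ j → j ≤ n →
      deriv (fun t =>
          deriv (fun s => H (Function.update (Function.update D j t) i s)) (D i)) (D j) =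
      deriv (fun t =>
          deriv (fun s => H (Function.update (Function.update D i t) j s)) (D j)) (D i)) ∧
    -- tridiagonality: entries vanish away from the three central diagonals
    (∀ i j, 1 ≤ i → i + 1 < j → j ≤ n →
      deriv (fun t =>
          deriv (fun s => H (Function.update (Function.update D j t) i s)) (D i)) (D j) = 0) := by
  classical
  set T : (ℕ → ℝ) → ℕ → ℝ := fun E j =>
    -((E j - E (j+1)) * Real.log (E j - E (j+1))) -
      (E j - E (j+1)) * cstar j (((C j + K j * E j) - (C (j+1) + K (j+1) * E (j+1))) /
        (E j - E (j+1))) with hT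
  have hHsum : ∀ E : ℕ → ℝ, E 0 = 1 → E (n+1) = 0 →
      H E = ∑ j ∈ Finset.range (n+1), T E j := by
    intro E h0 h1
    rw [hH E h0 h1, hT]
    rw [Finset.sum_sub_distrib, Finset.sum_neg_distrib]
  have hpack : ∀ i, i ≤ n → ∃ B : ℝ → ℝ, ∃ U : Set ℝ, IsOpen U ∧ Kbar i ∈ U ∧
      (∀ y ∈ U, HasDerivAt (cstar i) (B y) y) ∧ B (Kbar i) = β i ∧
      0 < deriv (deriv (c i)) (β i) ∧
      HasDerivAt B ((deriv (deriv (c i)) (β i)))⁻¹ (Kbar i) ∧ K i < Kbar i := by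
    intro i hi
    rcases eq_or_lt_of_le hi with rfl | hlt
    · have h := segn_pack (K i) (c i) (cstar i) hcn hcstarn (β i) hβn
      rw [hβ i le_rfl] at h
      exact h
    · have h := seg_pack (hKmono i hlt) (c i) (cstar i) (hc i hlt) (hcstar i hlt) (β i)
      rw [hβ i hi] at h
      obtain ⟨B, U, h1, h2, h3, h4, h5, h6, h7, _⟩ := h
      exact ⟨B, U, h1, h2, h3, h4, h5, h6, h7⟩
  have hKnonneg : ∀ i, i ≤ n → 0 ≤ K i := by
    intro i
    induction i with
    | zero => intro _; rw [hK0]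
    | succ k ih =>
      intro hk
      have h1 := ih (by omega)
      have h2 := hKmono k (by omega)
      linarith
  have hppos : ∀ i, i ≤ n → 0 < p i := by
    intro i hi
    rcases eq_or_lt_of_le hi with rfl | hlt
    · rw [hp i le_rfl, hDlast]
      simpa using hΩlown
    · obtain ⟨B, U, _, _, _, _, _, _, hKK⟩ := hpack i hi
      have hKd : 0 < K (i+1) - K i := sub_pos.2 (hKmono i hlt)
      have hup := hΩup (i+1) (by omega) (by omega)
      rw [show i + 1 - 1 = i from by omega] at hup
      have hnum : 0 < C i - C (i+1) - (K (i+1) - K i) * D (i+1) := by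
        rw [← neg_div, neg_sub] at hup
        have := (lt_div_iff₀ hKd).1 hup
        nlinarith [this]
      rcases lt_trichotomy (p i) 0 with hneg | hzero | hpos
      · exfalso
        have hqne : p i ≠ 0 := ne_of_lt hneg
        have hKbd : (Kbar i - K i) * p i = C i - C (i+1) - (K (i+1) - K i) * D (i+1) := by
          have e1 : Kbar i * p i = (C i + K i * D i) - (C (i+1) + K (i+1) * D (i+1)) := by
            rw [hKbar i hi]; exact div_mul_cancel₀ _ hqne
          rw [sub_mul, e1, hp i hi]; ring
        nlinarith [mul_pos (sub_pos.2 hKK) (neg_pos.2 hneg)]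
      · exfalso
        rw [hKbar i hi, hzero, div_zero] at hKK
        linarith [hKnonneg i hi]
      · exact hpos
  have hdecomp : ∀ i : ℕ, 1 ≤ i → i ≤ n → ∀ E : ℕ → ℝ,
      (∑ j ∈ Finset.range (n+1), T E j)
        = (∑ j ∈ ((Finset.range (n+1)).erase i).erase (i-1), T E j) + (T E (i-1) + T E i) := by
    intro i h1 h2 E
    rw [← Finset.sum_erase_add _ _ (show i ∈ Finset.range (n+1) by
      simp only [Finset.mem_range]; omega)]
    rw [← Finset.sum_erase_add _ _ (show i - 1 ∈ (Finset.range (n+1)).erase i by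
      simp only [Finset.mem_erase, Finset.mem_range]; omega)]
    ring
  have hTeq : ∀ (E : ℕ → ℝ) (k : ℕ) (v : ℝ) (j : ℕ), j ≠ k → j + 1 ≠ k →
      T (Function.update E k v) j = T E j := by
    intro E k v j h1 h2
    simp only [hT, Function.update_of_ne h1, Function.update_of_ne h2]
  have hdiag : ∀ i, 1 ≤ i → i ≤ n →
      deriv (deriv (fun s => H (Function.update D i s))) (D i) =
        -(1 / p (i - 1)) - 1 / p i -
          (K i - Kbar (i - 1)) ^ 2 / (p (i - 1) * deriv (deriv (c (i - 1))) (β (i - 1))) -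
          (Kbar i - K i) ^ 2 / (p i * deriv (deriv (c i)) (β i)) := by
    intro i hi1 hin
    have hi1' : i - 1 + 1 = i := by omega
    obtain ⟨B₁, U₁, hU₁o, hy₁U, hg₁, hB₁K, hσ₁, hB₁d, _⟩ := hpack (i-1) (by omega)
    obtain ⟨B₂, U₂, hU₂o, hy₂U, hg₂, hB₂K, hσ₂, hB₂d, _⟩ := hpack i hin
    have hp₁ : p (i-1) = D (i-1) - D i := by
      have := hp (i-1) (by omega); rwa [hi1'] at this
    have hp₂ : p i = D i - D (i+1) := hp i hin
    have hpp₁ : 0 < p (i-1) := hppos (i-1) (by omega)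
    have hpp₂ : 0 < p i := hppos i hin
    have hKb₁ : Kbar (i-1) = ((C (i-1) + K (i-1) * D (i-1)) - (C i + K i * D i)) / p (i-1) := by
      have := hKbar (i-1) (by omega); rwa [hi1'] at this
    have hKb₂ : Kbar i = ((C i + K i * D i) - (C (i+1) + K (i+1) * D (i+1))) / p i :=
      hKbar i hin
    set u₁ : ℝ → ℝ := fun s => D (i-1) - s with hu₁
    set N₁ : ℝ → ℝ := fun s => (C (i-1) + K (i-1) * D (i-1)) - (C i + K i * s) with hN₁
    set u₂ : ℝ → ℝ := fun s => s - D (i+1) with hu₂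
    set N₂ : ℝ → ℝ := fun s => (C i + K i * s) - (C (i+1) + K (i+1) * D (i+1)) with hN₂
    have hu₁v : u₁ (D i) = p (i-1) := by simp only [hu₁]; rw [hp₁]
    have hy₁v : N₁ (D i) / u₁ (D i) = Kbar (i-1) := by
      simp only [hu₁, hN₁]; rw [hKb₁, hp₁]
    have hu₂v : u₂ (D i) = p i := by simp only [hu₂]; rw [hp₂]
    have hy₂v : N₂ (D i) / u₂ (D i) = Kbar i := by
      simp only [hu₂, hN₂]; rw [hKb₂, hp₂]
    have hu₁d : ∀ s : ℝ, HasDerivAt u₁ (-1) s := fun s => by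
      simpa using (hasDerivAt_id s).const_sub (D (i-1))
    have hN₁d : ∀ s : ℝ, HasDerivAt N₁ ((-1) * K i) s := fun s => by
      have h1 : HasDerivAt (fun s' : ℝ => C i + K i * s') (K i) s := by
        simpa using ((hasDerivAt_id s).const_mul (K i)).const_add (C i)
      have := h1.const_sub (C (i-1) + K (i-1) * D (i-1))
      refine this.congr_deriv ?_
      ring
    have hu₂d : ∀ s : ℝ, HasDerivAt u₂ 1 s := fun s => by
      exact (hasDerivAt_id' s).sub_const (D (i+1))
    have hN₂d : ∀ s : ℝ, HasDerivAt N₂ (1 * K i) s := fun s => by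
      have h1 : HasDerivAt (fun s' : ℝ => C i + K i * s') (K i) s := by
        simpa using ((hasDerivAt_id s).const_mul (K i)).const_add (C i)
      have := h1.sub_const (C (i+1) + K (i+1) * D (i+1))
      refine this.congr_deriv ?_
      ring
    have hfeq : (fun s => H (Function.update D i s)) = fun s =>
        (∑ j ∈ ((Finset.range (n+1)).erase i).erase (i-1), T D j)
          + ((-(u₁ s * Real.log (u₁ s)) - u₁ s * cstar (i-1) (N₁ s / u₁ s))
            + (-(u₂ s * Real.log (u₂ s)) - u₂ s * cstar i (N₂ s / u₂ s))) := by
      funext s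
      have h0 : (Function.update D i s) 0 = 1 := by
        rw [Function.update_of_ne (by omega : (0:ℕ) ≠ i)]; exact hD0
      have h1 : (Function.update D i s) (n+1) = 0 := by
        rw [Function.update_of_ne (by omega : n+1 ≠ i)]; exact hDlast
      rw [hHsum _ h0 h1, hdecomp i hi1 hin]
      congr 1
      · apply Finset.sum_congr rfl
        intro k hk
        simp only [Finset.mem_erase, Finset.mem_range] at hk
        exact hTeq D i s k (by omega) (by omega)
      · congr 1
        · simp only [hT]
          rw [hi1']
          simp only [hu₁, hN₁, Function.update_self,
            Function.update_of_ne (show i - 1 ≠ i by omega)]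
        · simp only [hT, hu₂, hN₂, Function.update_self,
            Function.update_of_ne (show i + 1 ≠ i by omega)]
    have hcont_y₁ : ContinuousAt (fun s => N₁ s / u₁ s) (D i) :=
      (hN₁d (D i)).continuousAt.div (hu₁d (D i)).continuousAt
        (by rw [hu₁v]; exact ne_of_gt hpp₁)
    have hcont_y₂ : ContinuousAt (fun s => N₂ s / u₂ s) (D i) :=
      (hN₂d (D i)).continuousAt.div (hu₂d (D i)).continuousAt
        (by rw [hu₂v]; exact ne_of_gt hpp₂)
    have hev : ∀ᶠ s in 𝓝 (D i),
        (0 < u₁ s ∧ (N₁ s / u₁ s) ∈ U₁) ∧ (0 < u₂ s ∧ (N₂ s / u₂ s) ∈ U₂) := by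
      have e1 : ∀ᶠ s in 𝓝 (D i), 0 < u₁ s :=
        (hu₁d (D i)).continuousAt.eventually
          (eventually_gt_nhds (show (0:ℝ) < u₁ (D i) by rw [hu₁v]; exact hpp₁))
      have e2 : ∀ᶠ s in 𝓝 (D i), (N₁ s / u₁ s) ∈ U₁ :=
        hcont_y₁.eventually_mem (hU₁o.mem_nhds (by rw [hy₁v]; exact hy₁U))
      have e3 : ∀ᶠ s in 𝓝 (D i), 0 < u₂ s :=
        (hu₂d (D i)).continuousAt.eventually
          (eventually_gt_nhds (show (0:ℝ) < u₂ (D i) by rw [hu₂v]; exact hpp₂))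
      have e4 : ∀ᶠ s in 𝓝 (D i), (N₂ s / u₂ s) ∈ U₂ :=
        hcont_y₂.eventually_mem (hU₂o.mem_nhds (by rw [hy₂v]; exact hy₂U))
      filter_upwards [e1, e2, e3, e4] with s h1 h2 h3 h4
      exact ⟨⟨h1, h2⟩, ⟨h3, h4⟩⟩
    set φ : ℝ → ℝ := fun s =>
        (1:ℝ) * (Real.log (u₁ s) + 1 + cstar (i-1) (N₁ s / u₁ s)
          + B₁ (N₁ s / u₁ s) * (K i - N₁ s / u₁ s))
        + (-1:ℝ) * (Real.log (u₂ s) + 1 + cstar i (N₂ s / u₂ s)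
          + B₂ (N₂ s / u₂ s) * (K i - N₂ s / u₂ s)) with hφ
    have hder1 : ∀ᶠ s in 𝓝 (D i), HasDerivAt (fun s' =>
        (∑ j ∈ ((Finset.range (n+1)).erase i).erase (i-1), T D j)
          + ((-(u₁ s' * Real.log (u₁ s')) - u₁ s' * cstar (i-1) (N₁ s' / u₁ s'))
            + (-(u₂ s' * Real.log (u₂ s')) - u₂ s' * cstar i (N₂ s' / u₂ s')))) (φ s) s := by
      filter_upwards [hev] with s hs
      have o1 := one' (hu₁d s) (hN₁d s) rfl rfl hs.1.1 (hg₁ _ hs.1.2)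
      have o2 := one' (hu₂d s) (hN₂d s) rfl rfl hs.2.1 (hg₂ _ hs.2.2)
      have h := (o1.add o2).const_add
        (∑ j ∈ ((Finset.range (n+1)).erase i).erase (i-1), T D j)
      refine h.congr_deriv ?_
      simp only [hφ]
      ring
    rw [hfeq]
    have hderiv_eq : (deriv fun s' =>
        (∑ j ∈ ((Finset.range (n+1)).erase i).erase (i-1), T D j)
          + ((-(u₁ s' * Real.log (u₁ s')) - u₁ s' * cstar (i-1) (N₁ s' / u₁ s'))
            + (-(u₂ s' * Real.log (u₂ s')) - u₂ s' * cstar i (N₂ s' / u₂ s'))))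
        =ᶠ[𝓝 (D i)] φ := by
      filter_upwards [hder1] with s hs using hs.deriv
    rw [hderiv_eq.deriv_eq]
    have htwo1 := two' (ε := 1) (κ₂ := K i) (hu₁d (D i)) (hN₁d (D i)) hu₁v hy₁v (ne_of_gt hpp₁)
      (hg₁ _ hy₁U) hB₁d
    have htwo2 := two' (ε := -1) (κ₂ := K i) (hu₂d (D i)) (hN₂d (D i)) hu₂v hy₂v (ne_of_gt hpp₂)
      (hg₂ _ hy₂U) hB₂d
    have hφd : deriv φ (D i) =
        (1:ℝ) * ((-1) / p (i-1) + (deriv (deriv (c (i-1))) (β (i-1)))⁻¹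
            * ((-1) * (K i - Kbar (i-1)) / p (i-1)) * (K i - Kbar (i-1)))
        + (-1:ℝ) * (1 / p i + (deriv (deriv (c i)) (β i))⁻¹
            * (1 * (K i - Kbar i) / p i) * (K i - Kbar i)) := (htwo1.add htwo2).deriv
    rw [hφd]
    have h1 := ne_of_gt hpp₁
    have h2 := ne_of_gt hpp₂
    have h3 := ne_of_gt hσ₁
    have h4 := ne_of_gt hσ₂
    field_simp
    ring
  have hzero : ∀ i j, 1 ≤ i → i ≤ n → 1 ≤ j → j ≤ n → j ≠ i - 1 → j ≠ i → j ≠ i + 1 →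
      deriv (fun t =>
        deriv (fun s => H (Function.update (Function.update D j t) i s)) (D i)) (D j) = 0 := by
    intro i j hi1 hin hj1 hjn hne1 hne2 hne3
    have hi1' : i - 1 + 1 = i := by omega
    have hconst : ∀ t : ℝ,
        deriv (fun s => H (Function.update (Function.update D j t) i s)) (D i)
          = deriv (fun s => T (Function.update D i s) (i-1) + T (Function.update D i s) i)
              (D i) := by
      intro t
      have hfeq : (fun s => H (Function.update (Function.update D j t) i s))
          = fun s => (∑ k ∈ ((Finset.range (n+1)).erase i).erase (i-1),
              T (Function.update D j t) k)
            + (T (Function.update D i s) (i-1) + T (Function.update D i s) i) := by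
        funext s
        have h0 : (Function.update (Function.update D j t) i s) 0 = 1 := by
          rw [Function.update_of_ne (by omega : (0:ℕ) ≠ i),
            Function.update_of_ne (by omega : (0:ℕ) ≠ j)]
          exact hD0
        have h1 : (Function.update (Function.update D j t) i s) (n+1) = 0 := by
          rw [Function.update_of_ne (by omega : n+1 ≠ i),
            Function.update_of_ne (by omega : n+1 ≠ j)]
          exact hDlast
        rw [hHsum _ h0 h1, hdecomp i hi1 hin]
        congr 1
        · apply Finset.sum_congr rfl
          intro k hk
          simp only [Finset.mem_erase, Finset.mem_range] at hk
          exact hTeq _ i s k (by omega) (by omega)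
        · congr 1
          · simp only [hT]
            rw [hi1']
            simp only [Function.update_self,
              Function.update_of_ne (show i - 1 ≠ i by omega),
              Function.update_of_ne (show i - 1 ≠ j by omega)]
          · simp only [hT, Function.update_self,
              Function.update_of_ne (show i + 1 ≠ i by omega),
              Function.update_of_ne (show i + 1 ≠ j by omega)]
      rw [hfeq, deriv_const_add]
    have hconst' : (fun t : ℝ =>
        deriv (fun s => H (Function.update (Function.update D j t) i s)) (D i))
        = fun _ : ℝ =>
            deriv (fun s => T (Function.update D i s) (i-1) + T (Function.update D i s) i)
              (D i) := funext hconst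
    rw [hconst', deriv_const]
  have hmixed : ∀ i, 1 ≤ i → i + 1 ≤ n →
      (deriv (fun t =>
          deriv (fun s => H (Function.update (Function.update D (i + 1) t) i s)) (D i))
        (D (i + 1)) =
        1 / p i - (Kbar i - K i) * (K (i + 1) - Kbar i) / (p i * deriv (deriv (c i)) (β i))) ∧
      (deriv (fun t =>
          deriv (fun s => H (Function.update (Function.update D i t) (i + 1) s)) (D (i + 1)))
        (D i) =
        1 / p i - (Kbar i - K i) * (K (i + 1) - Kbar i) / (p i * deriv (deriv (c i)) (β i))) := by
    intro i hi1 hin1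
    have hin : i ≤ n := by omega
    have hi1' : i - 1 + 1 = i := by omega
    have hi2' : i + 1 - 1 = i := by omega
    obtain ⟨B₁, U₁, hU₁o, hy₁U, hg₁, hB₁K, hσ₁, hB₁d, _⟩ := hpack (i-1) (by omega)
    obtain ⟨B₂, U₂, hU₂o, hy₂U, hg₂, hB₂K, hσ₂, hB₂d, _⟩ := hpack i hin
    obtain ⟨B₃, U₃, hU₃o, hy₃U, hg₃, hB₃K, hσ₃, hB₃d, _⟩ := hpack (i+1) hin1
    have hp₁ : p (i-1) = D (i-1) - D i := by
      have := hp (i-1) (by omega); rwa [hi1'] at this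
    have hp₂ : p i = D i - D (i+1) := hp i hin
    have hp₃ : p (i+1) = D (i+1) - D (i+2) := hp (i+1) hin1
    have hpp₁ : 0 < p (i-1) := hppos (i-1) (by omega)
    have hpp₂ : 0 < p i := hppos i hin
    have hpp₃ : 0 < p (i+1) := hppos (i+1) hin1
    have hKb₁ : Kbar (i-1) = ((C (i-1) + K (i-1) * D (i-1)) - (C i + K i * D i)) / p (i-1) := by
      have := hKbar (i-1) (by omega); rwa [hi1'] at this
    have hKb₂ : Kbar i = ((C i + K i * D i) - (C (i+1) + K (i+1) * D (i+1))) / p i :=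
      hKbar i hin
    have hKb₃ : Kbar (i+1)
        = ((C (i+1) + K (i+1) * D (i+1)) - (C (i+2) + K (i+2) * D (i+2))) / p (i+1) :=
      hKbar (i+1) hin1
    set u₁ : ℝ → ℝ := fun s => D (i-1) - s with hu₁
    set N₁ : ℝ → ℝ := fun s => (C (i-1) + K (i-1) * D (i-1)) - (C i + K i * s) with hN₁
    set u₃ : ℝ → ℝ := fun s => s - D (i+2) with hu₃
    set N₃ : ℝ → ℝ := fun s => (C (i+1) + K (i+1) * s) - (C (i+2) + K (i+2) * D (i+2)) with hN₃
    have hu₁v : u₁ (D i) = p (i-1) := by simp only [hu₁]; rw [hp₁]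
    have hy₁v : N₁ (D i) / u₁ (D i) = Kbar (i-1) := by
      simp only [hu₁, hN₁]; rw [hKb₁, hp₁]
    have hu₃v : u₃ (D (i+1)) = p (i+1) := by simp only [hu₃]; rw [hp₃]
    have hy₃v : N₃ (D (i+1)) / u₃ (D (i+1)) = Kbar (i+1) := by
      simp only [hu₃, hN₃]; rw [hKb₃, hp₃]
    have hu₁d : ∀ s : ℝ, HasDerivAt u₁ (-1) s := fun s => by
      simpa using (hasDerivAt_id s).const_sub (D (i-1))
    have hN₁d : ∀ s : ℝ, HasDerivAt N₁ ((-1) * K i) s := fun s => by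
      have h1 : HasDerivAt (fun s' : ℝ => C i + K i * s') (K i) s := by
        simpa using ((hasDerivAt_id s).const_mul (K i)).const_add (C i)
      have := h1.const_sub (C (i-1) + K (i-1) * D (i-1))
      refine this.congr_deriv ?_
      ring
    have hu₃d : ∀ s : ℝ, HasDerivAt u₃ 1 s := fun s => by
      exact (hasDerivAt_id' s).sub_const (D (i+2))
    have hN₃d : ∀ s : ℝ, HasDerivAt N₃ (1 * K (i+1)) s := fun s => by
      have h1 : HasDerivAt (fun s' : ℝ => C (i+1) + K (i+1) * s') (K (i+1)) s := by
        simpa using ((hasDerivAt_id s).const_mul (K (i+1))).const_add (C (i+1))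
      have := h1.sub_const (C (i+2) + K (i+2) * D (i+2))
      refine this.congr_deriv ?_
      ring
    have hust : ∀ (t s : ℝ), HasDerivAt (fun s' : ℝ => s' - t) 1 s := fun t s => by
      simpa using (hasDerivAt_id s).sub_const t
    have hNst : ∀ (t s : ℝ), HasDerivAt
        (fun s' : ℝ => (C i + K i * s') - (C (i+1) + K (i+1) * t)) (1 * K i) s := fun t s => by
      have h1 : HasDerivAt (fun s' : ℝ => C i + K i * s') (K i) s := by
        simpa using ((hasDerivAt_id s).const_mul (K i)).const_add (C i)
      have := h1.sub_const (C (i+1) + K (i+1) * t)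
      refine this.congr_deriv ?_
      ring
    have hust' : ∀ (t s : ℝ), HasDerivAt (fun s' : ℝ => t - s') (-1) s := fun t s => by
      simpa using (hasDerivAt_id s).const_sub t
    have hNst' : ∀ (t s : ℝ), HasDerivAt
        (fun s' : ℝ => (C i + K i * t) - (C (i+1) + K (i+1) * s')) ((-1) * K (i+1)) s :=
      fun t s => by
      have h1 : HasDerivAt (fun s' : ℝ => C (i+1) + K (i+1) * s') (K (i+1)) s := by
        simpa using ((hasDerivAt_id s).const_mul (K (i+1))).const_add (C (i+1))
      have := h1.const_sub (C i + K i * t)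
      refine this.congr_deriv ?_
      ring
    have hcDt : ∀ t : ℝ, HasDerivAt (fun t' : ℝ => D i - t') (-1) t := fun t => by
      simpa using (hasDerivAt_id t).const_sub (D i)
    have hcNt : ∀ t : ℝ, HasDerivAt
        (fun t' : ℝ => (C i + K i * D i) - (C (i+1) + K (i+1) * t')) ((-1) * K (i+1)) t :=
      fun t => by
      have h1 : HasDerivAt (fun t' : ℝ => C (i+1) + K (i+1) * t') (K (i+1)) t := by
        simpa using ((hasDerivAt_id t).const_mul (K (i+1))).const_add (C (i+1))
      have := h1.const_sub (C i + K i * D i)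
      refine this.congr_deriv ?_
      ring
    have hcDt' : ∀ t : ℝ, HasDerivAt (fun t' : ℝ => t' - D (i+1)) 1 t := fun t => by
      simpa using (hasDerivAt_id t).sub_const (D (i+1))
    have hcNt' : ∀ t : ℝ, HasDerivAt
        (fun t' : ℝ => (C i + K i * t') - (C (i+1) + K (i+1) * D (i+1))) (1 * K i) t :=
      fun t => by
      have h1 : HasDerivAt (fun t' : ℝ => C i + K i * t') (K i) t := by
        simpa using ((hasDerivAt_id t).const_mul (K i)).const_add (C i)
      have := h1.sub_const (C (i+1) + K (i+1) * D (i+1))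
      refine this.congr_deriv ?_
      ring
    have hy₂v' : ((C i + K i * D i) - (C (i+1) + K (i+1) * D (i+1))) / (D i - D (i+1))
        = Kbar i := by rw [hKb₂, hp₂]
    have hσ₂ne : deriv (deriv (c i)) (β i) ≠ 0 := ne_of_gt hσ₂
    have hp₂ne : p i ≠ 0 := ne_of_gt hpp₂
    constructor
    -- FIRST MIXED ORDER
    · have hfeq2 : ∀ t : ℝ, (fun s => H (Function.update (Function.update D (i+1) t) i s))
          = fun s => (∑ k ∈ ((Finset.range (n+1)).erase i).erase (i-1),
                T (Function.update D (i+1) t) k)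
            + ((-(u₁ s * Real.log (u₁ s)) - u₁ s * cstar (i-1) (N₁ s / u₁ s))
              + (-((s - t) * Real.log (s - t)) - (s - t) *
                  cstar i (((C i + K i * s) - (C (i+1) + K (i+1) * t)) / (s - t)))) := by
        intro t
        funext s
        have h0 : (Function.update (Function.update D (i+1) t) i s) 0 = 1 := by
          rw [Function.update_of_ne (by omega : (0:ℕ) ≠ i),
            Function.update_of_ne (by omega : (0:ℕ) ≠ i+1)]
          exact hD0
        have h1 : (Function.update (Function.update D (i+1) t) i s) (n+1) = 0 := by
          rw [Function.update_of_ne (by omega : n+1 ≠ i),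
            Function.update_of_ne (by omega : n+1 ≠ i+1)]
          exact hDlast
        rw [hHsum _ h0 h1, hdecomp i hi1 hin]
        congr 1
        · apply Finset.sum_congr rfl
          intro k hk
          simp only [Finset.mem_erase, Finset.mem_range] at hk
          exact hTeq _ i s k (by omega) (by omega)
        · congr 1
          · simp only [hT]
            rw [hi1']
            simp only [hu₁, hN₁, Function.update_self,
              Function.update_of_ne (show i - 1 ≠ i by omega),
              Function.update_of_ne (show i - 1 ≠ i + 1 by omega)]
          · simp only [hT, Function.update_self,
              Function.update_of_ne (show i + 1 ≠ i by omega)]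
      have hevt : ∀ᶠ t in 𝓝 (D (i+1)), 0 < D i - t ∧
          ((C i + K i * D i) - (C (i+1) + K (i+1) * t)) / (D i - t) ∈ U₂ := by
        have e1 : ∀ᶠ t in 𝓝 (D (i+1)), 0 < D i - t := by
          have := (hcDt (D (i+1))).continuousAt.eventually
            (eventually_gt_nhds (show (0:ℝ) < D i - D (i+1) by rw [← hp₂]; exact hpp₂))
          exact this
        have hcy : ContinuousAt
            (fun t => ((C i + K i * D i) - (C (i+1) + K (i+1) * t)) / (D i - t)) (D (i+1)) :=
          (hcNt (D (i+1))).continuousAt.div (hcDt (D (i+1))).continuousAt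
            (by show D i - D (i+1) ≠ 0; rw [← hp₂]; exact hp₂ne)
        have e2 : ∀ᶠ t in 𝓝 (D (i+1)),
            ((C i + K i * D i) - (C (i+1) + K (i+1) * t)) / (D i - t) ∈ U₂ :=
          hcy.eventually_mem (hU₂o.mem_nhds (by
            show ((C i + K i * D i) - (C (i+1) + K (i+1) * D (i+1))) / (D i - D (i+1)) ∈ U₂
            rw [hy₂v']; exact hy₂U))
        filter_upwards [e1, e2] with t h1 h2
        exact ⟨h1, h2⟩
      set Φ : ℝ → ℝ := fun t =>
          ((1:ℝ) * (Real.log (p (i-1)) + 1 + cstar (i-1) (Kbar (i-1))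
            + B₁ (Kbar (i-1)) * (K i - Kbar (i-1))))
          + (-1:ℝ) * (Real.log (D i - t) + 1
              + cstar i (((C i + K i * D i) - (C (i+1) + K (i+1) * t)) / (D i - t))
              + B₂ (((C i + K i * D i) - (C (i+1) + K (i+1) * t)) / (D i - t))
                * (K i - ((C i + K i * D i) - (C (i+1) + K (i+1) * t)) / (D i - t))) with hΦ
      have hinner : ∀ᶠ t in 𝓝 (D (i+1)),
          deriv (fun s => H (Function.update (Function.update D (i+1) t) i s)) (D i)
            = Φ t := by
        filter_upwards [hevt] with t ht
        rw [hfeq2 t]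
        have o1 := one' (hu₁d (D i)) (hN₁d (D i)) hu₁v hy₁v hpp₁ (hg₁ _ hy₁U)
        have o2 := one' (hust t (D i)) (hNst t (D i))
          (show (D i : ℝ) - t = D i - t from rfl)
          (show ((C i + K i * D i) - (C (i+1) + K (i+1) * t)) / (D i - t)
            = ((C i + K i * D i) - (C (i+1) + K (i+1) * t)) / (D i - t) from rfl)
          ht.1 (hg₂ _ ht.2)
        have h := (o1.add o2).const_add
          (∑ k ∈ ((Finset.range (n+1)).erase i).erase (i-1), T (Function.update D (i+1) t) k)
        refine h.deriv.trans ?_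
        simp only [hΦ]
        ring
      have hEq : (fun t =>
          deriv (fun s => H (Function.update (Function.update D (i+1) t) i s)) (D i))
          =ᶠ[𝓝 (D (i+1))] Φ := hinner
      rw [hEq.deriv_eq]
      have htwoΦ := (two' (ε := -1) (κ₂ := K i) (hcDt (D (i+1))) (hcNt (D (i+1)))
        (show (D i : ℝ) - D (i+1) = p i from hp₂.symm)
        (show ((C i + K i * D i) - (C (i+1) + K (i+1) * D (i+1))) / (D i - D (i+1)) = Kbar i
          from hy₂v')
        hp₂ne (hg₂ _ hy₂U) hB₂d).const_add
        ((1:ℝ) * (Real.log (p (i-1)) + 1 + cstar (i-1) (Kbar (i-1))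
            + B₁ (Kbar (i-1)) * (K i - Kbar (i-1))))
      have hΦd : deriv Φ (D (i+1)) =
          (-1:ℝ) * ((-1) / p i + (deriv (deriv (c i)) (β i))⁻¹
            * ((-1) * (K (i+1) - Kbar i) / p i) * (K i - Kbar i)) := htwoΦ.deriv
      rw [hΦd]
      field_simp
      ring
    -- SECOND MIXED ORDER
    · have hfeq3 : ∀ t : ℝ, (fun s => H (Function.update (Function.update D i t) (i+1) s))
          = fun s => (∑ k ∈ ((Finset.range (n+1)).erase (i+1)).erase (i+1-1),
                T (Function.update D i t) k)
            + ((-((t - s) * Real.log (t - s)) - (t - s) *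
                  cstar i (((C i + K i * t) - (C (i+1) + K (i+1) * s)) / (t - s)))
              + (-(u₃ s * Real.log (u₃ s)) - u₃ s * cstar (i+1) (N₃ s / u₃ s))) := by
        intro t
        funext s
        have h0 : (Function.update (Function.update D i t) (i+1) s) 0 = 1 := by
          rw [Function.update_of_ne (by omega : (0:ℕ) ≠ i+1),
            Function.update_of_ne (by omega : (0:ℕ) ≠ i)]
          exact hD0
        have h1 : (Function.update (Function.update D i t) (i+1) s) (n+1) = 0 := by
          rw [Function.update_of_ne (by omega : n+1 ≠ i+1),
            Function.update_of_ne (by omega : n+1 ≠ i)]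
          exact hDlast
        rw [hHsum _ h0 h1, hdecomp (i+1) (by omega) hin1]
        congr 1
        · apply Finset.sum_congr rfl
          intro k hk
          simp only [Finset.mem_erase, Finset.mem_range] at hk
          exact hTeq _ (i+1) s k (by omega) (by omega)
        · congr 1
          · simp only [hT]
            rw [hi2']
            simp only [Function.update_self,
              Function.update_of_ne (show i ≠ i + 1 by omega)]
          · simp only [hT, hu₃, hN₃, Function.update_self,
              Function.update_of_ne (show i + 1 + 1 ≠ i + 1 by omega),
              Function.update_of_ne (show i + 1 + 1 ≠ i by omega)]
      have hevt' : ∀ᶠ t in 𝓝 (D i), 0 < t - D (i+1) ∧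
          ((C i + K i * t) - (C (i+1) + K (i+1) * D (i+1))) / (t - D (i+1)) ∈ U₂ := by
        have e1 : ∀ᶠ t in 𝓝 (D i), 0 < t - D (i+1) := by
          have := (hcDt' (D i)).continuousAt.eventually
            (eventually_gt_nhds (show (0:ℝ) < D i - D (i+1) by rw [← hp₂]; exact hpp₂))
          exact this
        have hcy : ContinuousAt
            (fun t => ((C i + K i * t) - (C (i+1) + K (i+1) * D (i+1))) / (t - D (i+1))) (D i) :=
          (hcNt' (D i)).continuousAt.div (hcDt' (D i)).continuousAt
            (by show D i - D (i+1) ≠ 0; rw [← hp₂]; exact hp₂ne)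
        have e2 : ∀ᶠ t in 𝓝 (D i),
            ((C i + K i * t) - (C (i+1) + K (i+1) * D (i+1))) / (t - D (i+1)) ∈ U₂ :=
          hcy.eventually_mem (hU₂o.mem_nhds (by
            show ((C i + K i * D i) - (C (i+1) + K (i+1) * D (i+1))) / (D i - D (i+1)) ∈ U₂
            rw [hy₂v']; exact hy₂U))
        filter_upwards [e1, e2] with t h1 h2
        exact ⟨h1, h2⟩
      set Ψ : ℝ → ℝ := fun t =>
          (1:ℝ) * (Real.log (t - D (i+1)) + 1
              + cstar i (((C i + K i * t) - (C (i+1) + K (i+1) * D (i+1))) / (t - D (i+1)))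
              + B₂ (((C i + K i * t) - (C (i+1) + K (i+1) * D (i+1))) / (t - D (i+1)))
                * (K (i+1) - ((C i + K i * t) - (C (i+1) + K (i+1) * D (i+1))) / (t - D (i+1))))
          + (-((1:ℝ) * (Real.log (p (i+1)) + 1 + cstar (i+1) (Kbar (i+1))
              + B₃ (Kbar (i+1)) * (K (i+1) - Kbar (i+1))))) with hΨ
      have hinner : ∀ᶠ t in 𝓝 (D i),
          deriv (fun s => H (Function.update (Function.update D i t) (i+1) s)) (D (i+1))
            = Ψ t := by
        filter_upwards [hevt'] with t ht
        rw [hfeq3 t]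
        have o1 := one' (hust' t (D (i+1))) (hNst' t (D (i+1)))
          (show (t : ℝ) - D (i+1) = t - D (i+1) from rfl)
          (show ((C i + K i * t) - (C (i+1) + K (i+1) * D (i+1))) / (t - D (i+1))
            = ((C i + K i * t) - (C (i+1) + K (i+1) * D (i+1))) / (t - D (i+1)) from rfl)
          ht.1 (hg₂ _ ht.2)
        have o2 := one' (hu₃d (D (i+1))) (hN₃d (D (i+1))) hu₃v hy₃v hpp₃ (hg₃ _ hy₃U)
        have h := (o1.add o2).const_add
          (∑ k ∈ ((Finset.range (n+1)).erase (i+1)).erase (i+1-1),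
            T (Function.update D i t) k)
        refine h.deriv.trans ?_
        simp only [hΨ]
        ring
      have hEq : (fun t =>
          deriv (fun s => H (Function.update (Function.update D i t) (i+1) s)) (D (i+1)))
          =ᶠ[𝓝 (D i)] Ψ := hinner
      rw [hEq.deriv_eq]
      have htwoΨ := (two' (ε := 1) (κ₂ := K (i+1)) (hcDt' (D i)) (hcNt' (D i))
        (show (D i : ℝ) - D (i+1) = p i from hp₂.symm)
        (show ((C i + K i * D i) - (C (i+1) + K (i+1) * D (i+1))) / (D i - D (i+1)) = Kbar i
          from hy₂v')
        hp₂ne (hg₂ _ hy₂U) hB₂d).add_const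
        (-((1:ℝ) * (Real.log (p (i+1)) + 1 + cstar (i+1) (Kbar (i+1))
              + B₃ (Kbar (i+1)) * (K (i+1) - Kbar (i+1)))))
      have hΨd : deriv Ψ (D i) =
          (1:ℝ) * (1 / p i + (deriv (deriv (c i)) (β i))⁻¹
            * (1 * (K i - Kbar i) / p i) * (K (i+1) - Kbar i)) := htwoΨ.deriv
      rw [hΨd]
      field_simp
      ring
  refine ⟨hdiag, ?_, ?_, ?_⟩
  · intro i hi1 hin1
    exact (hmixed i hi1 (by omega)).1
  · intro i j hi1 hin hj1 hjn
    rcases eq_or_ne j i with rfl | hne0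
    · rfl
    rcases eq_or_ne j (i+1) with rfl | hne1
    · rw [(hmixed i hi1 (by omega)).1, (hmixed i hi1 (by omega)).2]
    rcases eq_or_ne i (j+1) with rfl | hne2
    · rw [(hmixed j hj1 (by omega)).2, (hmixed j hj1 (by omega)).1]
    · rw [hzero i j hi1 hin hj1 hjn (by omega) (by omega) (by omega),
        hzero j i hj1 hjn hi1 hin (by omega) (by omega) (by omega)]
  · intro i j hi1 hij hjn
    exact hzero i j hi1 (by omega) (by omega) hjn (by omega) (by omega) (by omega)
end

section
/- Suppose p_0, ..., p_n ∈ (0, 1] and A is the n×n symmetric tridiagonal matrix with ⟨A d, d⟩ = d_1²/p_0 + Σ_{i=1}^{n−1} (d_i − d_{i+1})²/p_i + d_n²/p_n. Then ⟨A d, d⟩ ≥ 4 sin²(π/(2n+2)) ‖d‖² for all d ∈ ℝⁿ. -/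
/-- If `p_0, ..., p_n ∈ (0, 1]`, the quadratic form
`d_1²/p_0 + Σ_{i=1}^{n-1} (d_i - d_{i+1})²/p_i + d_n²/p_n` is bounded below by
`4 sin²(π/(2n+2)) ‖d‖²`. -/
theorem stmt_15 (n : ℕ) (hn : 0 < n) (p : ℕ → ℝ)
    (hp : ∀ i ≤ n, 0 < p i ∧ p i ≤ 1) :
    ∀ d : ℕ → ℝ,
      4 * Real.sin (Real.pi / (2 * n + 2)) ^ 2 * ∑ i ∈ Finset.Icc 1 n, d i ^ 2 ≤
        d 1 ^ 2 / p 0 + (∑ i ∈ Finset.Icc 1 (n - 1), (d i - d (i + 1)) ^ 2 / p i) +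
          d n ^ 2 / p n := by
  intro d
  have hn1 : (0:ℝ) < (n:ℝ) + 1 := by positivity
  set θ : ℝ := Real.pi / (n + 1) with hθdef
  have hθpos : 0 < θ := by positivity
  have hπ : ((n:ℝ) + 1) * θ = Real.pi := by rw [hθdef]; field_simp
  set φ : ℕ → ℝ := fun i => Real.sin (i * θ) with hφdef
  have hφ0 : φ 0 = 0 := by simp [hφdef]
  have hφtop : φ (n + 1) = 0 := by
    simp only [hφdef]
    push_cast
    rw [hπ, Real.sin_pi]
  have hφpos : ∀ i, 1 ≤ i → i ≤ n → 0 < φ i := by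
    intro i h1 h2
    apply Real.sin_pos_of_pos_of_lt_pi
    · have : (1:ℝ) ≤ i := by exact_mod_cast h1
      nlinarith
    · have hi : (i:ℝ) ≤ n := by exact_mod_cast h2
      calc (i:ℝ) * θ < ((n:ℝ)+1) * θ := by nlinarith
        _ = Real.pi := hπ
  have hrec : ∀ i : ℕ, 1 ≤ i → φ (i+1) + φ (i-1) = 2 * Real.cos θ * φ i := by
    intro i hi
    have h1 : ((i+1 : ℕ):ℝ) * θ = i * θ + θ := by push_cast; ring
    have h2 : ((i-1 : ℕ):ℝ) * θ = i * θ - θ := by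
      rw [Nat.cast_sub hi]; push_cast; ring
    simp only [hφdef, h1, h2, Real.sin_add, Real.sin_sub]
    ring
  have hlam : 4 * Real.sin (Real.pi / (2 * n + 2)) ^ 2 = 2 - 2 * Real.cos θ := by
    have h : Real.pi / (2 * n + 2) = θ / 2 := by
      rw [hθdef, div_div]
      congr 1
      ring
    rw [h]
    have h1 := Real.sin_sq_add_cos_sq (θ/2)
    have h2 : Real.cos (θ/2) ^ 2 = 1/2 + Real.cos (2 * (θ/2)) / 2 := Real.cos_sq _
    have h3 : 2 * (θ/2) = θ := by ring
    rw [h3] at h2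
    linarith
  rw [hlam]
  have hred : d 1 ^ 2 + (∑ i ∈ Finset.Icc 1 (n - 1), (d i - d (i + 1)) ^ 2) + d n ^ 2 ≤
      d 1 ^ 2 / p 0 + (∑ i ∈ Finset.Icc 1 (n - 1), (d i - d (i + 1)) ^ 2 / p i) +
        d n ^ 2 / p n := by
    have hterm : ∀ (x : ℝ) (i : ℕ), i ≤ n → x ^ 2 ≤ x ^ 2 / p i := by
      intro x i hi
      obtain ⟨h1, h2⟩ := hp i hi
      rw [le_div_iff₀ h1]
      nlinarith [sq_nonneg x]
    have hs : (∑ i ∈ Finset.Icc 1 (n - 1), (d i - d (i + 1)) ^ 2) ≤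
        ∑ i ∈ Finset.Icc 1 (n - 1), (d i - d (i + 1)) ^ 2 / p i := by
      refine Finset.sum_le_sum fun i hi => hterm _ i ?_
      simp only [Finset.mem_Icc] at hi
      omega
    have h0 := hterm (d 1) 0 (by omega)
    have hnn := hterm (d n) n le_rfl
    linarith
  refine le_trans ?_ hred
  have key : ∀ i ∈ Finset.Icc 1 (n-1),
      (1 - φ (i+1) / φ i) * d i ^ 2 + (1 - φ i / φ (i+1)) * d (i+1) ^ 2 ≤
        (d i - d (i+1)) ^ 2 := by
    intro i hi
    simp only [Finset.mem_Icc] at hi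
    have ha : 0 < φ i := hφpos i hi.1 (by omega)
    have hb : 0 < φ (i+1) := hφpos (i+1) (by omega) (by omega)
    have heq : (1 - φ (i+1) / φ i) * d i ^ 2 + (1 - φ i / φ (i+1)) * d (i+1) ^ 2
        = (d i - d (i+1)) ^ 2 - (φ (i+1) * d i - φ i * d (i+1)) ^ 2 / (φ i * φ (i+1)) := by
      field_simp
      ring
    rw [heq]
    have hpos : 0 ≤ (φ (i+1) * d i - φ i * d (i+1)) ^ 2 / (φ i * φ (i+1)) := by positivity
    linarith
  have hsum : ∑ i ∈ Finset.Icc 1 (n-1),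
      ((1 - φ (i+1) / φ i) * d i ^ 2 + (1 - φ i / φ (i+1)) * d (i+1) ^ 2)
      ≤ ∑ i ∈ Finset.Icc 1 (n-1), (d i - d (i+1)) ^ 2 := Finset.sum_le_sum key
  have hEq : (2 - 2 * Real.cos θ) * ∑ i ∈ Finset.Icc 1 n, d i ^ 2
      = d 1 ^ 2 + (∑ i ∈ Finset.Icc 1 (n-1),
          ((1 - φ (i+1) / φ i) * d i ^ 2 + (1 - φ i / φ (i+1)) * d (i+1) ^ 2)) + d n ^ 2 := by
    have step1 : (2 - 2 * Real.cos θ) * ∑ i ∈ Finset.Icc 1 n, d i ^ 2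
        = ∑ i ∈ Finset.Icc 1 n,
            ((1 - φ (i+1) / φ i) * d i ^ 2 + (1 - φ (i-1) / φ i) * d i ^ 2) := by
      rw [Finset.mul_sum]
      refine Finset.sum_congr rfl fun i hi => ?_
      simp only [Finset.mem_Icc] at hi
      have ha : φ i ≠ 0 := ne_of_gt (hφpos i hi.1 hi.2)
      have h := hrec i hi.1
      field_simp
      nlinarith [h]
    rw [step1, Finset.sum_add_distrib]
    -- first sum: split off top
    have htopsplit : ∑ i ∈ Finset.Icc 1 n, (1 - φ (i+1) / φ i) * d i ^ 2
        = (∑ i ∈ Finset.Icc 1 (n-1), (1 - φ (i+1) / φ i) * d i ^ 2) + d n ^ 2 := by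
      have hn' : n - 1 + 1 = n := by omega
      rw [← hn', Finset.sum_Icc_succ_top (by omega : 1 ≤ n - 1 + 1)]
      rw [hn']
      have : (1 - φ (n+1) / φ n) * d n ^ 2 = d n ^ 2 := by
        rw [hφtop]; simp
      rw [this]
    -- second sum: split off bottom and reindex
    have hbotsplit : ∑ i ∈ Finset.Icc 1 n, (1 - φ (i-1) / φ i) * d i ^ 2
        = d 1 ^ 2 + ∑ i ∈ Finset.Icc 1 (n-1), (1 - φ i / φ (i+1)) * d (i+1) ^ 2 := by
      have hins : Finset.Icc 1 n = insert 1 (Finset.Icc 2 n) := by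
        ext x
        simp only [Finset.mem_Icc, Finset.mem_insert]
        omega
      rw [hins, Finset.sum_insert (by simp)]
      have h1 : (1 - φ (1-1) / φ 1) * d 1 ^ 2 = d 1 ^ 2 := by
        norm_num [hφ0]
      rw [h1]
      congr 1
      have hmap : Finset.Icc 2 n = (Finset.Icc 1 (n-1)).map (addRightEmbedding 1) := by
        rw [Finset.map_add_right_Icc]
        congr 1
        omega
      rw [hmap, Finset.sum_map]
      refine Finset.sum_congr rfl fun i hi => ?_
      simp only [addRightEmbedding_apply, Nat.add_sub_cancel]
    rw [htopsplit, hbotsplit, Finset.sum_add_distrib]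
    ring
  rw [hEq]
  linarith
end

section
/- Let ĝ(x) = μ^{−1} exp(Σ_{i=0}^n λ_i (x − K_i)^+) be a Buchen–Kelly density on [0, ∞) and let g be any strictly positive density on [0, ∞) matching the same call prices, i.e. ∫_0^∞ (x − K_i)^+ g(x) dx = ∫_0^∞ (x − K_i)^+ ĝ(x) dx = C_i for all i = 0, ..., n. Then the relative entropy satisfies I(g‖ĝ) = H(ĝ) − H(g), where H(f) = −∫_0^∞ f ln f dx denotes differential entropy and I(g‖ĝ) = ∫_0^∞ g ln(g/ĝ) dx. -/
open MeasureTheory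

/-- For a Buchen–Kelly density `ĝ` and any strictly positive density `g`
matching the same call prices, the relative entropy equals the entropy
difference: `I(g‖ĝ) = H(ĝ) - H(g)`. -/
theorem stmt_17 (n : ℕ) (K : ℕ → ℝ) (hK0 : K 0 = 0)
    (hKmono : ∀ i < n, K i < K (i + 1))
    (lam : ℕ → ℝ) (hlam : ∑ i ∈ Finset.range (n + 1), lam i < 0)
    (μ : ℝ)
    (hμ : μ = ∫ x in Set.Ici (0 : ℝ),
      Real.exp (∑ i ∈ Finset.range (n + 1), lam i * max (x - K i) 0))
    (ghat g : ℝ → ℝ)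
    (hghat : ∀ x, ghat x =
      μ⁻¹ * Real.exp (∑ i ∈ Finset.range (n + 1), lam i * max (x - K i) 0))
    (hgpos : ∀ x ∈ Set.Ici (0 : ℝ), 0 < g x)
    (hgint : IntegrableOn g (Set.Ici 0))
    (hgnorm : ∫ x in Set.Ici (0 : ℝ), g x = 1)
    -- the call-price constraints (with integrability of the payoffs)
    (hcallintg : ∀ i ≤ n, IntegrableOn (fun x => max (x - K i) 0 * g x) (Set.Ici 0))
    (hcallintgh : ∀ i ≤ n, IntegrableOn (fun x => max (x - K i) 0 * ghat x) (Set.Ici 0))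
    (hmatch : ∀ i ≤ n,
      ∫ x in Set.Ici (0 : ℝ), max (x - K i) 0 * g x =
        ∫ x in Set.Ici (0 : ℝ), max (x - K i) 0 * ghat x)
    -- finiteness of the entropies and of the relative entropy
    (hentg : IntegrableOn (fun x => g x * Real.log (g x)) (Set.Ici 0))
    (hentgh : IntegrableOn (fun x => ghat x * Real.log (ghat x)) (Set.Ici 0))
    (hrel : IntegrableOn (fun x => g x * Real.log (g x / ghat x)) (Set.Ici 0)) :
    ∫ x in Set.Ici (0 : ℝ), g x * Real.log (g x / ghat x) =
      (-∫ x in Set.Ici (0 : ℝ), ghat x * Real.log (ghat x)) -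
        (-∫ x in Set.Ici (0 : ℝ), g x * Real.log (g x)) := by

  -- notation
  set S : ℝ → ℝ := fun x => ∑ i ∈ Finset.range (n + 1), lam i * max (x - K i) 0 with hS
  have hcontS : Continuous S := by
    apply continuous_finset_sum
    intro i _
    exact continuous_const.mul ((continuous_id.sub continuous_const).max continuous_const)
  -- monotonicity of K
  have hKle : ∀ j ≤ n, ∀ i ≤ j, K i ≤ K j := by
    intro j
    induction j with
    | zero => intro _ i hi; interval_cases i; exact le_rfl
    | succ m ih =>
      intro hj i hi
      rcases eq_or_lt_of_le hi with h | h
      · rw [h]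
      · exact le_trans (ih (le_trans (Nat.le_succ m) hj) i (Nat.lt_succ_iff.mp h))
          (le_of_lt (hKmono m (Nat.lt_of_succ_le hj)))
  have hKn0 : 0 ≤ K n := hK0 ▸ hKle n le_rfl 0 (Nat.zero_le n)
  set a : ℝ := ∑ i ∈ Finset.range (n + 1), lam i with ha
  set b : ℝ := ∑ i ∈ Finset.range (n + 1), lam i * K i with hb
  have hEtail : ∀ x ∈ Set.Ici (K n), S x = a * x - b := by
    intro x hx
    have hterm : ∀ i ∈ Finset.range (n + 1),
        lam i * max (x - K i) 0 = lam i * x - lam i * K i := by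
      intro i hi
      have hKi : K i ≤ x :=
        le_trans (hKle n le_rfl i (Nat.lt_succ_iff.mp (Finset.mem_range.mp hi))) hx
      rw [max_eq_left (by linarith), mul_sub]
    rw [hS]
    simp only []
    rw [Finset.sum_congr rfl hterm, Finset.sum_sub_distrib, ← Finset.sum_mul, ← ha, ← hb]
  -- integrability of exp ∘ S
  have hEint1 : IntegrableOn (fun x => Real.exp (S x)) (Set.Icc 0 (K n)) :=
    (Real.continuous_exp.comp hcontS).integrableOn_Icc
  have hEint2 : IntegrableOn (fun x => Real.exp (S x)) (Set.Ici (K n)) := by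
    rw [integrableOn_Ici_iff_integrableOn_Ioi]
    have hpos : (0:ℝ) < -a := by simpa [ha] using hlam
    have h1 : IntegrableOn (fun x => Real.exp (-b) * Real.exp (-(-a) * x)) (Set.Ioi (K n)) :=
      (exp_neg_integrableOn_Ioi (K n) hpos).const_mul _
    apply h1.congr_fun _ measurableSet_Ioi
    intro x hx
    show Real.exp (-b) * Real.exp (- -a * x) = Real.exp (S x)
    rw [hEtail x (Set.mem_Ici.mpr (le_of_lt hx)), ← Real.exp_add]
    congr 1
    ring
  have hEint : IntegrableOn (fun x => Real.exp (S x)) (Set.Ici 0) := by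
    apply (hEint1.union hEint2).mono_set
    intro x hx
    rcases le_or_gt x (K n) with h | h
    · exact Or.inl ⟨hx, h⟩
    · exact Or.inr (le_of_lt h)
  -- positivity of μ
  have hμpos : 0 < μ := by
    rw [hμ]
    rw [setIntegral_pos_iff_support_of_nonneg_ae
      (Filter.Eventually.of_forall fun x => (Real.exp_pos _).le) hEint]
    have : (Function.support fun x => Real.exp (S x)) = Set.univ := by
      ext x; simp [Function.support, (Real.exp_pos (S x)).ne']
    rw [this, Set.univ_inter, Real.volume_Ici]
    simp
  have hμne : μ ≠ 0 := hμpos.ne'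
  have hghat_pos : ∀ x, 0 < ghat x := by
    intro x
    rw [hghat x]
    positivity
  -- normalization of ghat
  have hghat_eq : ghat = fun x => μ⁻¹ * Real.exp (S x) := funext hghat
  have hghint : IntegrableOn ghat (Set.Ici 0) := by
    rw [hghat_eq]; exact hEint.const_mul _
  have hghnorm : ∫ x in Set.Ici (0:ℝ), ghat x = 1 := by
    rw [hghat_eq]
    simp only []
    rw [MeasureTheory.integral_const_mul, ← hμ, inv_mul_cancel₀ hμne]
  -- log of ghat
  have hloggh : ∀ x, Real.log (ghat x) = -Real.log μ + S x := by
    intro x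
    rw [hghat x, Real.log_mul (inv_ne_zero hμne) (Real.exp_pos _).ne',
      Real.log_inv, Real.log_exp]
  -- integrability and value of ∫ f * log ghat for f ∈ {g, ghat}
  have key : ∀ f : ℝ → ℝ, IntegrableOn f (Set.Ici 0) →
      (∫ x in Set.Ici (0:ℝ), f x = 1) →
      (∀ i ≤ n, IntegrableOn (fun x => max (x - K i) 0 * f x) (Set.Ici 0)) →
      IntegrableOn (fun x => f x * Real.log (ghat x)) (Set.Ici 0) ∧
      ∫ x in Set.Ici (0:ℝ), f x * Real.log (ghat x)
        = -Real.log μ + ∑ i ∈ Finset.range (n + 1),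
            lam i * ∫ x in Set.Ici (0:ℝ), max (x - K i) 0 * f x := by
    intro f hfint hfnorm hcall
    have hSf_eq : (fun x => f x * S x)
        = fun x => ∑ i ∈ Finset.range (n + 1), lam i * (max (x - K i) 0 * f x) := by
      funext x
      rw [hS]
      simp only []
      rw [Finset.mul_sum]
      exact Finset.sum_congr rfl fun i _ => by ring
    have hSf_int : IntegrableOn (fun x => f x * S x) (Set.Ici 0) := by
      rw [hSf_eq]
      exact integrable_finset_sum _ fun i hi =>
        ((hcall i (Nat.lt_succ_iff.mp (Finset.mem_range.mp hi))).const_mul (lam i))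
    have heq : (fun x => f x * Real.log (ghat x))
        = fun x => (-Real.log μ) * f x + f x * S x := by
      funext x; rw [hloggh x]; ring
    constructor
    · rw [heq]
      exact (hfint.const_mul _).add hSf_int
    · rw [heq]
      rw [integral_add (hfint.const_mul _) hSf_int, MeasureTheory.integral_const_mul, hfnorm, mul_one]
      congr 1
      rw [hSf_eq]
      rw [integral_finset_sum _ fun i hi =>
        ((hcall i (Nat.lt_succ_iff.mp (Finset.mem_range.mp hi))).const_mul (lam i))]
      exact Finset.sum_congr rfl fun i _ => MeasureTheory.integral_const_mul _ _
  obtain ⟨hint_g, hval_g⟩ := key g hgint hgnorm hcallintg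
  obtain ⟨hint_gh, hval_gh⟩ := key ghat hghint hghnorm hcallintgh
  -- ∫ g log ghat = ∫ ghat log ghat
  have hsame : ∫ x in Set.Ici (0:ℝ), g x * Real.log (ghat x)
      = ∫ x in Set.Ici (0:ℝ), ghat x * Real.log (ghat x) := by
    rw [hval_g, hval_gh]
    congr 1
    exact Finset.sum_congr rfl fun i hi => by
      rw [hmatch i (Nat.lt_succ_iff.mp (Finset.mem_range.mp hi))]
  -- split the relative entropy integral
  have hsplit : ∫ x in Set.Ici (0:ℝ), g x * Real.log (g x / ghat x)
      = (∫ x in Set.Ici (0:ℝ), g x * Real.log (g x))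
        - ∫ x in Set.Ici (0:ℝ), g x * Real.log (ghat x) := by
    rw [← integral_sub hentg hint_g]
    apply setIntegral_congr_fun measurableSet_Ici
    intro x hx
    show g x * Real.log (g x / ghat x) = g x * Real.log (g x) - g x * Real.log (ghat x)
    rw [Real.log_div (hgpos x hx).ne' (hghat_pos x).ne']
    ring
  rw [hsplit, hsame]
  ring
end
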